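/- arXiv:2605.14917 — 6 statements merged into one kernel-verified Lean document; each statement's English description precedes it below -/
import Mathlib

section
/- Let p and q be probability measures on a measurable space (𝒴, ℬ(𝒴)) with p ≪ q, and suppose there exists a constant C ≥ 1 such that dp/dq ≤ C holds q-almost everywhere. Then KL(p‖q) ≤ 2·M_C·TV(p, q), where M_C := max(1, (C·log C − C + 1)/(C − 1)) for C > 1 and M_1 := 1. -/
open MeasureTheory

/-- Kullback–Leibler divergence `KL(p‖q) := ∫ (dp/dq) log(dp/dq) dq`. -/
noncomputable def KL {Y : Type*} [MeasurableSpace Y] (p q : Measure Y) : ℝ :=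
  ∫ y, (p.rnDeriv q y).toReal * Real.log (p.rnDeriv q y).toReal ∂q

/-- Total variation distance `TV(p, q) := sup_{A measurable} |p(A) - q(A)|`. -/
noncomputable def TV {Y : Type*} [MeasurableSpace Y] (p q : Measure Y) : ℝ :=
  ⨆ A : {A : Set Y // MeasurableSet A}, |(p A).toReal - (q A).toReal|

/-- `M_C := max 1 ((C log C - C + 1)/(C - 1))` for `C > 1`; for `C = 1` Lean's
convention `x / 0 = 0` gives `MC 1 = max 1 0 = 1 = M_1`, matching the paper. -/
noncomputable def MC (C : ℝ) : ℝ := max 1 ((C * Real.log C - C + 1) / (C - 1))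

lemma one_le_MC (C : ℝ) : 1 ≤ MC C := le_max_left _ _

/-- `φ(x) = x log x - x + 1 ≥ 0` for `x ≥ 0`. -/
lemma phi_nonneg {x : ℝ} (hx : 0 ≤ x) : 0 ≤ x * Real.log x - x + 1 := by
  rcases eq_or_lt_of_le hx with h | h
  · simp [← h]
  · have h1 : 1 - x⁻¹ ≤ Real.log x := Real.one_sub_inv_le_log_of_pos h
    have h2 : x * (1 - x⁻¹) ≤ x * Real.log x := by
      exact mul_le_mul_of_nonneg_left h1 hx
    have h3 : x * (1 - x⁻¹) = x - 1 := by field_simp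
    linarith

/-- Key pointwise inequality: `φ(x) ≤ M_C |x - 1|` for `0 ≤ x ≤ C`. -/
lemma key_ineq (C : ℝ) (hC : 1 ≤ C) {x : ℝ} (hx0 : 0 ≤ x) (hxC : x ≤ C) :
    x * Real.log x - x + 1 ≤ MC C * |x - 1| := by
  rcases le_or_gt x 1 with h | h
  · have hlog : Real.log x ≤ 0 := Real.log_nonpos hx0 h
    have hxl : x * Real.log x ≤ 0 := mul_nonpos_of_nonneg_of_nonpos hx0 hlog
    have habs : |x - 1| = 1 - x := by rw [abs_of_nonpos (by linarith)]; ring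
    have hM : 1 ≤ MC C := one_le_MC C
    rw [habs]
    nlinarith
  · have hC1 : 1 < C := lt_of_lt_of_le h hxC
    have hC1' : (0:ℝ) < C - 1 := by linarith
    have habs : |x - 1| = x - 1 := abs_of_pos (by linarith)
    rw [habs]
    set b := (x - 1) / (C - 1) with hb
    set a := (C - x) / (C - 1) with ha
    have ha0 : 0 ≤ a := div_nonneg (by linarith) hC1'.le
    have hb0 : 0 ≤ b := div_nonneg (by linarith) hC1'.le
    have hab : a + b = 1 := by
      rw [ha, hb, ← add_div, div_eq_one_iff_eq hC1'.ne']; ring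
    have hconv := Real.convexOn_mul_log.2 (Set.mem_Ici.mpr (by norm_num : (0:ℝ) ≤ 1))
      (Set.mem_Ici.mpr (by linarith : (0:ℝ) ≤ C)) ha0 hb0 hab
    have hx_eq : a • (1:ℝ) + b • C = x := by
      simp only [smul_eq_mul, mul_one, ha, hb]
      rw [div_mul_eq_mul_div, ← add_div, eq_comm, eq_div_iff hC1'.ne']
      ring
    rw [hx_eq] at hconv
    simp only [smul_eq_mul, Real.log_one, mul_zero, mul_one, zero_add] at hconv
    -- hconv : x * Real.log x ≤ b * (C * Real.log C)
    have hKM : (C * Real.log C - C + 1) / (C - 1) ≤ MC C := le_max_right _ _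
    have hMx : (C * Real.log C - C + 1) / (C - 1) * (x - 1) ≤ MC C * (x - 1) :=
      mul_le_mul_of_nonneg_right hKM (by linarith)
    have heq : (C * Real.log C - C + 1) / (C - 1) * (x - 1)
        = b * (C * Real.log C) - (x - 1) := by
      rw [hb]; field_simp; ring
    linarith

/-- if `p, q` are probability measures with `p ≪ q` and
`dp/dq ≤ C` q-a.e. for some `C ≥ 1`, then `KL(p‖q) ≤ 2 M_C TV(p, q)`. -/
theorem stmt2 {Y : Type*} [MeasurableSpace Y] (p q : Measure Y)
    [IsProbabilityMeasure p] [IsProbabilityMeasure q] (hpq : p ≪ q)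
    (C : ℝ) (hC : 1 ≤ C)
    (hbound : ∀ᵐ y ∂q, p.rnDeriv q y ≤ ENNReal.ofReal C) :
    KL p q ≤ 2 * MC C * TV p q := by
  set f : Y → ℝ := fun y => (p.rnDeriv q y).toReal with hf
  have hfmeas : Measurable f := (Measure.measurable_rnDeriv p q).ennreal_toReal
  have hf0 : ∀ y, 0 ≤ f y := fun y => ENNReal.toReal_nonneg
  have hfC : ∀ᵐ y ∂q, f y ≤ C := by
    filter_upwards [hbound] with y hy
    exact ENNReal.toReal_le_of_le_ofReal (by linarith) hy
  have hfint : Integrable f q := Measure.integrable_toReal_rnDeriv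
  have hfint1 : ∫ y, f y ∂q = 1 := by
    rw [hf]
    rw [Measure.integral_toReal_rnDeriv hpq]
    simp
  -- φ ∘ f
  set φf : Y → ℝ := fun y => f y * Real.log (f y) - f y + 1 with hφf
  have hφmeas : Measurable φf := by
    exact ((hfmeas.mul (hfmeas.log)).sub hfmeas).add measurable_const
  have hφ0 : ∀ y, 0 ≤ φf y := fun y => phi_nonneg (hf0 y)
  have hφle : ∀ᵐ y ∂q, φf y ≤ MC C * |f y - 1| := by
    filter_upwards [hfC] with y hy
    exact key_ineq C hC (hf0 y) hy
  have hMC0 : (0:ℝ) ≤ MC C := le_trans zero_le_one (one_le_MC C)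
  have habsint : Integrable (fun y => |f y - 1|) q := (hfint.sub (integrable_const 1)).abs
  have hφint : Integrable φf q := by
    refine Integrable.mono' (habsint.const_mul (MC C)) hφmeas.aestronglyMeasurable ?_
    filter_upwards [hφle] with y hy
    rw [Real.norm_eq_abs, abs_of_nonneg (hφ0 y)]
    exact hy
  -- KL = ∫ φf
  have hf1int : Integrable (fun y => f y - 1) q := hfint.sub (integrable_const 1)
  have hKL : KL p q = ∫ y, φf y ∂q := by
    rw [KL]
    calc ∫ y, f y * Real.log (f y) ∂q = ∫ y, (φf y + (f y - 1)) ∂q := by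
          congr 1; ext y; simp only [hφf]; ring
      _ = ∫ y, φf y ∂q + ∫ y, (f y - 1) ∂q := integral_add hφint hf1int
      _ = ∫ y, φf y ∂q := by
          rw [integral_sub hfint (integrable_const 1)]
          simp [hfint1]
  -- ∫ φf ≤ MC C * ∫ |f - 1|
  have step1 : ∫ y, φf y ∂q ≤ MC C * ∫ y, |f y - 1| ∂q := by
    rw [← integral_const_mul]
    exact integral_mono_ae hφint (habsint.const_mul (MC C)) hφle
  -- TV bound
  have hTV_bdd : BddAbove (Set.range fun A : {A : Set Y // MeasurableSet A} =>
      |(p A).toReal - (q A).toReal|) := by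
    refine ⟨1, ?_⟩
    rintro x ⟨A, rfl⟩
    have h1 : (p A).toReal ≤ 1 := by
      have := prob_le_one (μ := p) (s := A)
      simpa using ENNReal.toReal_mono ENNReal.one_ne_top this
    have h2 : (q A).toReal ≤ 1 := by
      have := prob_le_one (μ := q) (s := A)
      simpa using ENNReal.toReal_mono ENNReal.one_ne_top this
    have h3 : (0:ℝ) ≤ (p A).toReal := ENNReal.toReal_nonneg
    have h4 : (0:ℝ) ≤ (q A).toReal := ENNReal.toReal_nonneg
    rw [abs_le]; constructor <;> linarith
  have hTV_ge : ∀ (A : Set Y), MeasurableSet A → |(p A).toReal - (q A).toReal| ≤ TV p q :=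
    fun A hA => le_ciSup hTV_bdd ⟨A, hA⟩
  -- ∫ |f - 1| ≤ 2 TV
  have step2 : ∫ y, |f y - 1| ∂q ≤ 2 * TV p q := by
    set A : Set Y := {y | 1 ≤ f y} with hA
    have hAm : MeasurableSet A := hfmeas measurableSet_Ici
    have hsplit : ∫ y, |f y - 1| ∂q
        = ∫ y in A, |f y - 1| ∂q + ∫ y in Aᶜ, |f y - 1| ∂q :=
      (integral_add_compl hAm habsint).symm
    have hsetf : ∀ (s : Set Y), ∫ y in s, f y ∂q = (p s).toReal := fun s =>
      Measure.setIntegral_toReal_rnDeriv hpq s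
    have hq_fin : ∀ (s : Set Y), IsFiniteMeasure (q.restrict s) := fun s =>
      inferInstance
    have hintA : ∫ y in A, |f y - 1| ∂q = (p A).toReal - (q A).toReal := by
      have : ∫ y in A, |f y - 1| ∂q = ∫ y in A, (f y - 1) ∂q := by
        refine setIntegral_congr_fun hAm ?_
        intro y hy
        have hy1 : (1:ℝ) ≤ f y := hy
        exact abs_of_nonneg (by linarith)
      rw [this, integral_sub (hfint.restrict) (integrable_const 1), hsetf]
      simp [Measure.restrict_apply_univ]
      rfl
    have hintAc : ∫ y in Aᶜ, |f y - 1| ∂q = (q Aᶜ).toReal - (p Aᶜ).toReal := by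
      have : ∫ y in Aᶜ, |f y - 1| ∂q = ∫ y in Aᶜ, (1 - f y) ∂q := by
        refine setIntegral_congr_fun hAm.compl ?_
        intro y hy
        have hlt : f y < 1 := by simpa [hA] using hy
        show |f y - 1| = 1 - f y
        rw [abs_of_nonpos (by linarith)]; ring
      rw [this, integral_sub (integrable_const 1) (hfint.restrict), hsetf]
      simp [Measure.restrict_apply_univ]
      rfl
    have h1 : ∫ y in A, |f y - 1| ∂q ≤ TV p q := by
      rw [hintA]
      exact le_trans (le_abs_self _) (hTV_ge A hAm)
    have h2 : ∫ y in Aᶜ, |f y - 1| ∂q ≤ TV p q := by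
      rw [hintAc]
      refine le_trans ?_ (hTV_ge Aᶜ hAm.compl)
      rw [abs_sub_comm]
      exact le_abs_self _
    rw [hsplit]; linarith
  calc KL p q = ∫ y, φf y ∂q := hKL
    _ ≤ MC C * ∫ y, |f y - 1| ∂q := step1
    _ ≤ MC C * (2 * TV p q) := mul_le_mul_of_nonneg_left step2 hMC0
    _ = 2 * MC C * TV p q := by ring
end

section
/- Let (𝒵, P_Z) be a probability space, 𝒴 a measurable space, and for two parameters θ, θ* let z ↦ p_θ(·|z) and z ↦ p_{θ*}(·|z) be probability kernels from 𝒵 to 𝒴, with p̄_θ := ∫ p_θ(·|z) dP_Z(z). Assume: (i) there is a probability measure p* on 𝒴 with p_{θ*}(·|z) = p* for P_Z-almost every z; and (ii) there is C ≥ 1 such that for P_Z-almost every z, p_θ(·|z) ≪ p̄_θ with dp_θ(·|z)/dp̄_θ ≤ C p̄_θ-almost everywhere. Then I_θ := ∫ KL(p_θ(·|z) ‖ p̄_θ) dP_Z(z) ≤ 4·M_C·sup_{z ∈ 𝒵} TV(p_θ(·|z), p_{θ*}(·|z)). -/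
open MeasureTheory

lemma MC_nonneg (C : ℝ) : 0 ≤ MC C := zero_le_one.trans (one_le_MC C)

lemma psi_le {C t : ℝ} (hC : 1 ≤ C) (ht0 : 0 ≤ t) (htC : t ≤ C) :
    t * Real.log t - t + 1 ≤ MC C * |t - 1| := by
  rcases le_total t 1 with h | h
  · rw [abs_of_nonpos (by linarith)]
    have hlog : t * Real.log t ≤ 0 :=
      mul_nonpos_of_nonneg_of_nonpos ht0 (Real.log_nonpos ht0 h)
    nlinarith [one_le_MC C]
  · rw [abs_of_nonneg (by linarith)]
    rcases eq_or_lt_of_le hC with hC1 | hC1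
    · have ht1 : t = 1 := le_antisymm (hC1 ▸ htC) h
      simp [ht1]
    · have hCpos : (0:ℝ) < C - 1 := by linarith
      set b : ℝ := (t - 1) / (C - 1) with hb
      have hb0 : 0 ≤ b := div_nonneg (by linarith) hCpos.le
      have hb1 : b ≤ 1 := by rw [div_le_one hCpos]; linarith
      have hbt : (1 - b) * 1 + b * C = t := by rw [hb]; linear_combination div_mul_cancel₀ (t - 1) hCpos.ne'
      have key := Real.convexOn_mul_log.2 (Set.mem_Ici.mpr zero_le_one)
        (Set.mem_Ici.mpr (by linarith : (0:ℝ) ≤ C)) (by linarith : (0:ℝ) ≤ 1 - b) hb0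
        (by ring)
      rw [smul_eq_mul, smul_eq_mul, smul_eq_mul, smul_eq_mul, hbt] at key
      simp only [Real.log_one, mul_zero, mul_one, zero_add] at key
      -- key : t * Real.log t ≤ b * (C * Real.log C)
      have hMC : C * Real.log C - C + 1 ≤ MC C * (C - 1) :=
        (div_le_iff₀ hCpos).mp (le_max_right _ _)
      have htb : t - 1 = b * (C - 1) := by rw [hb]; linear_combination -(div_mul_cancel₀ (t - 1) hCpos.ne')
      have h3 : MC C * (t - 1) = b * (MC C * (C - 1)) := by rw [htb]; ring
      have h4 : b * (C * Real.log C - C + 1) ≤ b * (MC C * (C - 1)) :=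
        mul_le_mul_of_nonneg_left hMC hb0
      nlinarith [h3, h4]

section TVlemmas
variable {Y : Type*} [MeasurableSpace Y] (p q r : Measure Y)
  [IsProbabilityMeasure p] [IsProbabilityMeasure q] [IsProbabilityMeasure r]

lemma prob_toReal_le_one (A : Set Y) : (p A).toReal ≤ 1 := by
  simpa using ENNReal.toReal_mono ENNReal.one_ne_top (prob_le_one (μ := p) (s := A))

lemma tv_term_le_one (A : Set Y) : |(p A).toReal - (q A).toReal| ≤ 1 :=
  abs_le.mpr ⟨by have := prob_toReal_le_one q A; have := ENNReal.toReal_nonneg (a := p A); linarith,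
    by have := prob_toReal_le_one p A; have := ENNReal.toReal_nonneg (a := q A); linarith⟩

lemma tv_bddAbove :
    BddAbove (Set.range fun A : {A : Set Y // MeasurableSet A} =>
      |(p ↑A).toReal - (q ↑A).toReal|) := by
  refine ⟨1, ?_⟩
  rintro x ⟨A, rfl⟩
  exact tv_term_le_one p q A

lemma le_TV {A : Set Y} (hA : MeasurableSet A) :
    |(p A).toReal - (q A).toReal| ≤ TV p q :=
  le_ciSup (tv_bddAbove p q) (⟨A, hA⟩ : {A : Set Y // MeasurableSet A})

lemma tv_nonneg : 0 ≤ TV p q :=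
  (abs_nonneg _).trans (le_TV p q MeasurableSet.empty)

lemma tv_le_one : TV p q ≤ 1 := by
  haveI : Nonempty {A : Set Y // MeasurableSet A} := ⟨⟨∅, MeasurableSet.empty⟩⟩
  exact ciSup_le fun A => tv_term_le_one p q A

lemma tv_triangle : TV p r ≤ TV p q + TV q r := by
  haveI : Nonempty {A : Set Y // MeasurableSet A} := ⟨⟨∅, MeasurableSet.empty⟩⟩
  refine ciSup_le fun A => ?_
  calc |(p ↑A).toReal - (r ↑A).toReal|
      ≤ |(p ↑A).toReal - (q ↑A).toReal| + |(q ↑A).toReal - (r ↑A).toReal| :=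
        abs_sub_le _ _ _
    _ ≤ TV p q + TV q r := add_le_add (le_TV p q A.2) (le_TV q r A.2)

end TVlemmas

lemma abs_mul_log_le {C t : ℝ} (hC : 1 ≤ C) (ht0 : 0 ≤ t) (htC : t ≤ C) :
    |t * Real.log t| ≤ C * C + 1 := by
  rcases eq_or_lt_of_le ht0 with h0 | h0
  · simp [← h0]; nlinarith
  rcases le_total t 1 with h | h
  · have hlog : Real.log t ≤ 0 := Real.log_nonpos ht0 h
    have hinv : -Real.log t ≤ t⁻¹ - 1 := by
      rw [← Real.log_inv]
      exact Real.log_le_sub_one_of_pos (inv_pos.mpr h0)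
    rw [abs_of_nonpos (mul_nonpos_of_nonneg_of_nonpos ht0 hlog)]
    have := mul_le_mul_of_nonneg_left hinv ht0
    rw [mul_sub, mul_inv_cancel₀ h0.ne'] at this
    nlinarith
  · have hlog0 : 0 ≤ Real.log t := Real.log_nonneg h
    have hlog : Real.log t ≤ t - 1 := Real.log_le_sub_one_of_pos h0
    rw [abs_of_nonneg (mul_nonneg ht0 hlog0)]
    nlinarith

lemma kl_le_two_mc_tv {Y : Type*} [MeasurableSpace Y] (p q : Measure Y)
    [IsProbabilityMeasure p] [IsProbabilityMeasure q]
    {C : ℝ} (hC : 1 ≤ C) (hpq : p ≪ q)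
    (hr : ∀ᵐ y ∂q, p.rnDeriv q y ≤ ENNReal.ofReal C) :
    KL p q ≤ 2 * MC C * TV p q := by
  set f : Y → ℝ := fun y => (p.rnDeriv q y).toReal with hf
  have hfm : Measurable f := (Measure.measurable_rnDeriv p q).ennreal_toReal
  have hf0 : ∀ y, 0 ≤ f y := fun y => ENNReal.toReal_nonneg
  have hfC : ∀ᵐ y ∂q, f y ≤ C :=
    hr.mono fun y h => ENNReal.toReal_le_of_le_ofReal (by linarith) h
  have hint_f : Integrable f q :=
    ⟨hfm.aestronglyMeasurable, HasFiniteIntegral.of_bounded (C := C)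
      (hfC.mono fun y h => by rw [Real.norm_eq_abs, abs_of_nonneg (hf0 y)]; exact h)⟩
  have hint_flf : Integrable (fun y => f y * Real.log (f y)) q :=
    ⟨(hfm.mul (Real.measurable_log.comp hfm)).aestronglyMeasurable,
      HasFiniteIntegral.of_bounded (C := C * C + 1)
        (hfC.mono fun y h => by
          rw [Real.norm_eq_abs]; exact abs_mul_log_le hC (hf0 y) h)⟩
  have hintf1 : ∫ y, f y ∂q = 1 := by
    rw [hf, Measure.integral_toReal_rnDeriv hpq]
    simp
  have i1 : Integrable (fun y => f y * Real.log (f y) - f y) q := hint_flf.sub hint_f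
  have i2 : Integrable (fun y => f y - 1) q := hint_f.sub (integrable_const 1)
  -- KL = ∫ ψ(f)
  have h1 : KL p q = ∫ y, (f y * Real.log (f y) - f y + 1) ∂q := by
    rw [integral_add i1 (integrable_const 1),
      integral_sub hint_flf hint_f, hintf1]
    simp [KL, hf]
  -- ∫ ψ(f) ≤ MC C * ∫ |f − 1|
  have h2 : ∫ y, (f y * Real.log (f y) - f y + 1) ∂q
      ≤ ∫ y, MC C * |f y - 1| ∂q := by
    refine integral_mono_ae ((hint_flf.sub hint_f).add (integrable_const 1))
      (((hint_f.sub (integrable_const 1)).abs).const_mul _) ?_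
    exact hfC.mono fun y h => psi_le hC (hf0 y) h
  -- ∫ |f − 1| ≤ 2 TV
  set A : Set Y := {y | 1 < f y} with hA
  have hAm : MeasurableSet A := measurableSet_lt measurable_const hfm
  have hind : ∀ y, |f y - 1| = 2 * (A.indicator (fun y => f y - 1) y) - (f y - 1) := by
    intro y
    by_cases hy : y ∈ A
    · rw [Set.indicator_of_mem hy, abs_of_pos (by simpa [hA] using hy : (0:ℝ) < f y - 1)]
      ring
    · rw [Set.indicator_of_notMem hy,
        abs_of_nonpos (by simp [hA] at hy; linarith : f y - 1 ≤ 0)]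
      ring
  have hindint : Integrable (A.indicator (fun y => f y - 1)) q := i2.indicator hAm
  have i3 : Integrable (fun y => 2 * A.indicator (fun y => f y - 1) y) q :=
    hindint.const_mul 2
  have h3 : ∫ y, |f y - 1| ∂q ≤ 2 * TV p q := by
    have e1 : ∫ y, |f y - 1| ∂q
        = 2 * ∫ y, A.indicator (fun y => f y - 1) y ∂q - ∫ y, (f y - 1) ∂q := by
      simp only [hind]
      rw [integral_sub i3 i2, integral_const_mul]
    have e2 : ∫ y, (f y - 1) ∂q = 0 := by
      rw [integral_sub hint_f (integrable_const 1), hintf1]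
      simp
    have e3 : ∫ y, A.indicator (fun y => f y - 1) y ∂q
        = (p A).toReal - (q A).toReal := by
      rw [integral_indicator hAm,
        integral_sub (hint_f.integrableOn) (integrableOn_const (measure_ne_top q A)),
        Measure.setIntegral_toReal_rnDeriv hpq A]
      simp [measureReal_def]
    have e4 : (p A).toReal - (q A).toReal ≤ TV p q :=
      (le_abs_self _).trans (le_TV p q hAm)
    rw [e1, e2, e3]
    linarith
  calc KL p q ≤ ∫ y, MC C * |f y - 1| ∂q := h1 ▸ h2
    _ = MC C * ∫ y, |f y - 1| ∂q := integral_const_mul _ _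
    _ ≤ MC C * (2 * TV p q) := mul_le_mul_of_nonneg_left h3 (MC_nonneg C)
    _ = 2 * MC C * TV p q := by ring

/-- for probability kernels `z ↦ p_θ(·|z)` and `z ↦ p_{θ*}(·|z)`
over `(𝒵, P_Z)`, with mixture `p̄_θ := ∫ p_θ(·|z) dP_Z(z)` (realized as `PZ.bind pθ`),
if (i) `p_{θ*}(·|z) = p*` for a.e. `z`, and (ii) `p_θ(·|z) ≪ p̄_θ` with
`dp_θ(·|z)/dp̄_θ ≤ C` `p̄_θ`-a.e. for a.e. `z` and some `C ≥ 1`, then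
`I_θ = ∫ KL(p_θ(·|z) ‖ p̄_θ) dP_Z(z) ≤ 4 M_C · sup_z TV(p_θ(·|z), p_{θ*}(·|z))`. -/
theorem stmt6 {Z Y : Type*} [MeasurableSpace Z] [MeasurableSpace Y]
    (PZ : Measure Z) [IsProbabilityMeasure PZ]
    (pθ pθs : Z → Measure Y) (hθ : Measurable pθ) (hθs : Measurable pθs)
    (hθprob : ∀ z, IsProbabilityMeasure (pθ z))
    (hθsprob : ∀ z, IsProbabilityMeasure (pθs z))
    (pstar : Measure Y) [IsProbabilityMeasure pstar]
    (h1 : ∀ᵐ z ∂PZ, pθs z = pstar)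
    (C : ℝ) (hC : 1 ≤ C)
    (h2 : ∀ᵐ z ∂PZ, pθ z ≪ PZ.bind pθ ∧
        ∀ᵐ y ∂(PZ.bind pθ), (pθ z).rnDeriv (PZ.bind pθ) y ≤ ENNReal.ofReal C) :
    ∫ z, KL (pθ z) (PZ.bind pθ) ∂PZ ≤ 4 * MC C * ⨆ z, TV (pθ z) (pθs z) := by
  set q : Measure Y := PZ.bind pθ with hq
  haveI hqprob : IsProbabilityMeasure q := by
    constructor
    rw [hq, Measure.bind_apply MeasurableSet.univ hθ.aemeasurable]
    simp [fun z => (hθprob z).measure_univ]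
  haveI hZ : Nonempty Z := by
    by_contra h
    rw [not_nonempty_iff] at h
    have h1' := measure_univ (μ := PZ)
    rw [Set.univ_eq_empty_iff.mpr h, measure_empty] at h1'
    exact zero_ne_one h1'
  set S : ℝ := ⨆ z, TV (pθ z) (pθs z) with hS
  have hbddS : BddAbove (Set.range fun z => TV (pθ z) (pθs z)) := by
    refine ⟨1, ?_⟩
    rintro x ⟨z, rfl⟩
    haveI := hθprob z; haveI := hθsprob z
    exact tv_le_one _ _
  have hS0 : 0 ≤ S := by
    obtain ⟨z0⟩ := hZ
    haveI := hθprob z0; haveI := hθsprob z0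
    exact (tv_nonneg (pθ z0) (pθs z0)).trans (le_ciSup hbddS z0)
  -- TV pstar q ≤ S
  have hint_meas : ∀ A : Set Y, MeasurableSet A →
      Measurable (fun z => ((pθ z) A).toReal) := fun A hA =>
    ((Measure.measurable_coe hA).comp hθ).ennreal_toReal
  have hTVq : TV pstar q ≤ S := by
    haveI : Nonempty {A : Set Y // MeasurableSet A} := ⟨⟨∅, MeasurableSet.empty⟩⟩
    refine ciSup_le ?_
    rintro ⟨A, hA⟩
    have hintg : Integrable (fun z => ((pθ z) A).toReal) PZ :=
      ⟨(hint_meas A hA).aestronglyMeasurable, HasFiniteIntegral.of_bounded (C := 1)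
        (Filter.Eventually.of_forall fun z => by
          haveI := hθprob z
          rw [Real.norm_eq_abs, abs_of_nonneg ENNReal.toReal_nonneg]
          exact prob_toReal_le_one (pθ z) A)⟩
    have hm : Measurable (fun z => (pθ z) A) := (Measure.measurable_coe hA).comp hθ
    have hqA : (q A).toReal = ∫ z, ((pθ z) A).toReal ∂PZ := by
      rw [hq, Measure.bind_apply hA hθ.aemeasurable,
        ← integral_toReal hm.aemeasurable
          (Filter.Eventually.of_forall fun z => by
            haveI := hθprob z
            exact lt_of_le_of_lt prob_le_one ENNReal.one_lt_top)]
    have hpA : (pstar A).toReal = ∫ _z, (pstar A).toReal ∂PZ := by simp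
    rw [hqA, hpA, ← integral_sub (integrable_const _) hintg]
    calc |∫ z, ((pstar A).toReal - ((pθ z) A).toReal) ∂PZ|
        ≤ ∫ z, |(pstar A).toReal - ((pθ z) A).toReal| ∂PZ := by
          simpa [Real.norm_eq_abs] using
            norm_integral_le_integral_norm (fun z => (pstar A).toReal - ((pθ z) A).toReal)
      _ ≤ ∫ _z, S ∂PZ := by
          refine integral_mono_ae ((integrable_const _).sub hintg).abs (integrable_const S) ?_
          filter_upwards [h1] with z hz
          haveI := hθprob z; haveI := hθsprob z
          rw [abs_sub_comm, ← hz]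
          exact (le_TV (pθ z) (pθs z) hA).trans (le_ciSup hbddS z)
      _ = S := by simp
  -- a.e. bound on KL
  have hae : ∀ᵐ z ∂PZ, KL (pθ z) q ≤ 4 * MC C * S := by
    filter_upwards [h1, h2] with z hz1 hz2
    haveI := hθprob z; haveI := hθsprob z
    have t1 : KL (pθ z) q ≤ 2 * MC C * TV (pθ z) q :=
      kl_le_two_mc_tv (pθ z) q hC hz2.1 hz2.2
    have t2 : TV (pθ z) q ≤ TV (pθ z) pstar + TV pstar q := tv_triangle (pθ z) pstar q
    have t3 : TV (pθ z) pstar ≤ S := by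
      rw [← hz1]
      exact le_ciSup hbddS z
    have hMC := MC_nonneg C
    nlinarith [tv_nonneg (pθ z) q]
  by_cases hint : Integrable (fun z => KL (pθ z) q) PZ
  · calc ∫ z, KL (pθ z) q ∂PZ ≤ ∫ _z, 4 * MC C * S ∂PZ :=
        integral_mono_ae hint (integrable_const _) hae
      _ = 4 * MC C * S := by simp
  · rw [integral_undef hint]
    exact mul_nonneg (by nlinarith [MC_nonneg C]) hS0
end

section
/- Let (𝒴, ℬ(𝒴)) be a measurable space, (𝒵, P_Z) a probability space, and Θ ⊆ ℝ^d. For each θ ∈ Θ let z ↦ p_θ(·|z) be a probability kernel from 𝒵 to 𝒴 and set p̄_θ := ∫ p_θ(·|z) dP_Z(z). Fix θ* ∈ Θ and let (θ̂_n) be Θ-valued random variables. Assume: (A1) there exists a probability measure p* on 𝒴 with p_{θ*}(·|z) = p* for P_Z-almost every z; (A2) θ̂_n → θ* in probability; (A3) for every ε > 0 there exists δ > 0 such that ‖θ − θ*‖ < δ implies sup_{z ∈ 𝒵} TV(p_θ(·|z), p_{θ*}(·|z)) < ε; (A4) there exist C ≥ 1 and a neighborhood U of θ* such that for all θ ∈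 U and P_Z-almost every z, p_θ(·|z) ≪ p̄_θ with dp_θ(·|z)/dp̄_θ ≤ C p̄_θ-almost everywhere. Then I_{θ̂_n} := ∫ KL(p_{θ̂_n}(·|z) ‖ p̄_{θ̂_n}) dP_Z(z) → 0 in probability as n → ∞. -/
open MeasureTheory Filter

/- Auxiliary pointwise inequalities about `x ↦ x log x`. -/

lemma aux_nonneg {x : ℝ} (hx0 : 0 ≤ x) : 0 ≤ x * Real.log x - x + 1 := by
  rcases eq_or_lt_of_le hx0 with h | h
  · simp [← h]
  · have h1 : Real.log x⁻¹ ≤ x⁻¹ - 1 := Real.log_le_sub_one_of_pos (by positivity)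
    rw [Real.log_inv] at h1
    have h2 := mul_le_mul_of_nonneg_left h1 h.le
    rw [mul_sub, mul_inv_cancel₀ h.ne'] at h2
    nlinarith

lemma aux_upper {x C : ℝ} (hx0 : 0 ≤ x) (hxC : x ≤ C) (hC : 1 ≤ C) :
    x * Real.log x - x + 1 ≤ C * |x - 1| := by
  rcases le_or_gt x 1 with h | h
  · have hlog := Real.log_nonpos hx0 h
    have hxl : x * Real.log x ≤ 0 := by nlinarith [mul_nonneg hx0 (neg_nonneg.mpr hlog)]
    rw [abs_of_nonpos (by linarith)]
    nlinarith
  · have hlog : Real.log x ≤ x - 1 := Real.log_le_sub_one_of_pos (by linarith)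
    have h2 : x * Real.log x ≤ x * (x - 1) := mul_le_mul_of_nonneg_left hlog hx0
    rw [abs_of_nonneg (by linarith)]
    nlinarith

lemma aux_abs {x C : ℝ} (hx0 : 0 ≤ x) (hxC : x ≤ C) (hC : 1 ≤ C) :
    |x * Real.log x| ≤ C * C + C := by
  have h1 := aux_nonneg hx0
  have h2 := aux_upper hx0 hxC hC
  have h3 : |x - 1| ≤ C := abs_le.mpr ⟨by linarith, by linarith⟩
  rw [abs_le]
  constructor <;> nlinarith [abs_nonneg (x - 1)]

/- Auxiliary facts about `TV`. -/

lemma measure_toReal_le_one {Y : Type*} [MeasurableSpace Y] (p : Measure Y)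
    [IsProbabilityMeasure p] (A : Set Y) : (p A).toReal ≤ 1 := by
  have h : (p A).toReal ≤ (p Set.univ).toReal :=
    ENNReal.toReal_mono (measure_ne_top p Set.univ) (measure_mono (Set.subset_univ A))
  simpa using h

lemma abs_sub_le_one {Y : Type*} [MeasurableSpace Y] (p q : Measure Y)
    [IsProbabilityMeasure p] [IsProbabilityMeasure q] (A : Set Y) :
    |(p A).toReal - (q A).toReal| ≤ 1 := by
  have h1 := measure_toReal_le_one p A
  have h2 := measure_toReal_le_one q A
  have h3 : (0:ℝ) ≤ (p A).toReal := ENNReal.toReal_nonneg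
  have h4 : (0:ℝ) ≤ (q A).toReal := ENNReal.toReal_nonneg
  rw [abs_le]; constructor <;> linarith

lemma TV_le_one {Y : Type*} [MeasurableSpace Y] (p q : Measure Y)
    [IsProbabilityMeasure p] [IsProbabilityMeasure q] : TV p q ≤ 1 := by
  haveI : Nonempty {A : Set Y // MeasurableSet A} := ⟨⟨∅, MeasurableSet.empty⟩⟩
  exact ciSup_le fun A => abs_sub_le_one p q A

lemma abs_le_TV {Y : Type*} [MeasurableSpace Y] (p q : Measure Y)
    [IsProbabilityMeasure p] [IsProbabilityMeasure q] {A : Set Y} (hA : MeasurableSet A) :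
    |(p A).toReal - (q A).toReal| ≤ TV p q := by
  apply le_ciSup (f := fun A : {A : Set Y // MeasurableSet A} =>
    |(p (A : Set Y)).toReal - (q (A : Set Y)).toReal|) _ ⟨A, hA⟩
  exact ⟨1, by rintro x ⟨B, rfl⟩; exact abs_sub_le_one p q B⟩

/-- The key single-measure estimate: if `dp/dq ≤ C` and all measurable sets have
`|p A - q A| ≤ η`, then `0 ≤ KL p q ≤ C * (2 * η)`. -/
lemma KL_le {Y : Type*} [MeasurableSpace Y] (pz q : Measure Y)
    [IsProbabilityMeasure pz] [IsProbabilityMeasure q] {C η : ℝ} (hC : 1 ≤ C)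
    (hac : pz ≪ q)
    (hbd : ∀ᵐ y ∂q, pz.rnDeriv q y ≤ ENNReal.ofReal C)
    (hTV : ∀ A : Set Y, MeasurableSet A → |(pz A).toReal - (q A).toReal| ≤ η) :
    KL pz q ∈ Set.Icc 0 (C * (2 * η)) := by
  set h : Y → ℝ := fun y => (pz.rnDeriv q y).toReal with hh
  have hmeas : Measurable h := (Measure.measurable_rnDeriv pz q).ennreal_toReal
  have hbd' : ∀ᵐ y ∂q, h y ≤ C :=
    hbd.mono fun y hy => ENNReal.toReal_le_of_le_ofReal (by linarith) hy
  have hint_h : Integrable h q := Measure.integrable_toReal_rnDeriv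
  have hint_sub : Integrable (fun y => |h y - 1|) q := (hint_h.sub (integrable_const 1)).abs
  set A : Set Y := {y | 1 < h y} with hA
  have hAmeas : MeasurableSet A := measurableSet_lt measurable_const hmeas
  -- ∫ |h - 1| ≤ 2η
  have hsetint : ∀ B : Set Y, MeasurableSet B → ∫ y in B, h y ∂q = (pz B).toReal :=
    fun B _ => Measure.setIntegral_toReal_rnDeriv hac B
  have hone : ∀ B : Set Y, ∫ _ in B, (1:ℝ) ∂q = (q B).toReal := by
    intro B; rw [setIntegral_const]; simp; rfl
  have step1 : ∫ y, |h y - 1| ∂q ≤ 2 * η := by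
    rw [← integral_add_compl hAmeas hint_sub]
    have e1 : ∫ y in A, |h y - 1| ∂q = (pz A).toReal - (q A).toReal := by
      rw [setIntegral_congr_fun hAmeas (g := fun y => h y - 1)
        (fun y hy => abs_of_nonneg (by simp only [hA, Set.mem_setOf_eq] at hy; linarith)),
        integral_sub hint_h.integrableOn (integrable_const 1).integrableOn,
        hsetint A hAmeas, hone A]
    have e2 : ∫ y in Aᶜ, |h y - 1| ∂q = (q Aᶜ).toReal - (pz Aᶜ).toReal := by
      rw [setIntegral_congr_fun hAmeas.compl (g := fun y => 1 - h y)
        (fun y hy => by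
          simp only [hA, Set.mem_compl_iff, Set.mem_setOf_eq, not_lt] at hy
          rw [abs_of_nonpos (by linarith), neg_sub]),
        integral_sub (integrable_const 1).integrableOn hint_h.integrableOn,
        hsetint Aᶜ hAmeas.compl, hone Aᶜ]
    have b1 : (pz A).toReal - (q A).toReal ≤ η := (abs_le.mp (hTV A hAmeas)).2
    have b2 : (q Aᶜ).toReal - (pz Aᶜ).toReal ≤ η := by
      have := (abs_le.mp (hTV Aᶜ hAmeas.compl)).1; linarith
    rw [e1, e2]; linarith
  -- integrability of h log h
  have hmeas_hlog : Measurable (fun y => h y * Real.log (h y)) :=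
    hmeas.mul (Real.measurable_log.comp hmeas)
  have hint_hlog : Integrable (fun y => h y * Real.log (h y)) q := by
    refine Integrable.mono' (integrable_const (C * C + C)) hmeas_hlog.aestronglyMeasurable ?_
    exact hbd'.mono fun y hy => by
      rw [Real.norm_eq_abs]
      exact aux_abs ENNReal.toReal_nonneg hy hC
  -- KL = ∫ (h log h - h + 1)
  have hint2 : Integrable (fun y => h y - 1) q := hint_h.sub (integrable_const 1)
  have hint_phi : Integrable (fun y => h y * Real.log (h y) - (h y - 1)) q :=
    hint_hlog.sub hint2
  have hKLeq : KL pz q = ∫ y, (h y * Real.log (h y) - (h y - 1)) ∂q := by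
    have e1 : ∫ y, (h y * Real.log (h y) - (h y - 1)) ∂q
        = ∫ y, h y * Real.log (h y) ∂q - ∫ y, (h y - 1) ∂q :=
      integral_sub hint_hlog hint2
    have e2 : ∫ y, (h y - 1) ∂q = ∫ y, h y ∂q - ∫ _, (1:ℝ) ∂q :=
      integral_sub hint_h (integrable_const 1)
    have e3 : ∫ y, h y ∂q = 1 := by
      rw [hh, Measure.integral_toReal_rnDeriv hac]; simp
    have e4 : ∫ _, (1:ℝ) ∂q = 1 := by simp
    rw [e1, e2, e3, e4]
    simp [KL, hh]
  constructor
  · rw [hKLeq]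
    have : (0:ℝ) ≤ ∫ y, (h y * Real.log (h y) - (h y - 1)) ∂q :=
      integral_nonneg fun y => by
        have := aux_nonneg (x := h y) ENNReal.toReal_nonneg
        simp only [Pi.zero_apply]
        linarith
    simpa using this
  · rw [hKLeq]
    have hle : ∫ y, (h y * Real.log (h y) - (h y - 1)) ∂q ≤ ∫ y, C * |h y - 1| ∂q := by
      refine integral_mono_ae hint_phi (hint_sub.const_mul C) ?_
      exact hbd'.mono fun y hy => by
        have := aux_upper (x := h y) ENNReal.toReal_nonneg hy hC
        dsimp only
        linarith
    calc ∫ y, (h y * Real.log (h y) - (h y - 1)) ∂q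
        ≤ ∫ y, C * |h y - 1| ∂q := hle
      _ = C * ∫ y, |h y - 1| ∂q := integral_const_mul C _
      _ ≤ C * (2 * η) := mul_le_mul_of_nonneg_left step1 (by linarith)

/-- Mutual Information Collapse: under well-specification (A1),
consistency of `θ̂_n` in probability (A2), uniform total-variation continuity at
`θ*` (A3), and a uniform likelihood-ratio bound near `θ*` (A4), the epistemic
mutual information `I_{θ̂_n} = ∫ KL(p_{θ̂_n}(·|z) ‖ p̄_{θ̂_n}) dP_Z(z)` converges
to `0` in probability. Mixtures `p̄_θ` are realized as `PZ.bind (p θ)`. -/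
theorem stmt7 {Y Z Ω : Type*} [MeasurableSpace Y] [MeasurableSpace Z] [MeasurableSpace Ω]
    {d : ℕ} (Θ : Set (EuclideanSpace ℝ (Fin d)))
    (PZ : Measure Z) [IsProbabilityMeasure PZ]
    (μ : Measure Ω) [IsProbabilityMeasure μ]
    (p : EuclideanSpace ℝ (Fin d) → Z → Measure Y)
    (hpmeas : ∀ θ, Measurable (p θ))
    (hpprob : ∀ θ z, IsProbabilityMeasure (p θ z))
    (θs : EuclideanSpace ℝ (Fin d)) (hθsΘ : θs ∈ Θ)
    (θhat : ℕ → Ω → EuclideanSpace ℝ (Fin d))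
    (hθhatmeas : ∀ n, Measurable (θhat n))
    (hθhatΘ : ∀ n ω, θhat n ω ∈ Θ)
    (pstar : Measure Y) (hpstarprob : IsProbabilityMeasure pstar)
    -- (A1) well-specification
    (hA1 : ∀ᵐ z ∂PZ, p θs z = pstar)
    -- (A2) consistency: θ̂_n → θ* in probability
    (hA2 : ∀ ε > (0 : ℝ), Tendsto (fun n => μ {ω | ε < ‖θhat n ω - θs‖}) atTop (nhds 0))
    -- (A3) uniform continuity in total variation at θ*
    (hA3 : ∀ ε > (0 : ℝ), ∃ δ > (0 : ℝ), ∀ θ ∈ Θ, ‖θ - θs‖ < δ →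
        (⨆ z, TV (p θ z) (p θs z)) < ε)
    -- (A4) bounded likelihood ratio in a neighborhood of θ*
    (hA4 : ∃ C ≥ (1 : ℝ), ∃ U ∈ nhds θs, ∀ θ ∈ U, θ ∈ Θ →
        ∀ᵐ z ∂PZ, p θ z ≪ PZ.bind (p θ) ∧
          ∀ᵐ y ∂(PZ.bind (p θ)),
            (p θ z).rnDeriv (PZ.bind (p θ)) y ≤ ENNReal.ofReal C) :
    ∀ ε > (0 : ℝ), Tendsto
      (fun n => μ {ω | ε < |∫ z, KL (p (θhat n ω) z) (PZ.bind (p (θhat n ω))) ∂PZ|})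
      atTop (nhds 0) := by
  intro ε hε
  obtain ⟨C, hC, U, hU, hA4'⟩ := hA4
  obtain ⟨r, hr, hball⟩ := Metric.mem_nhds_iff.mp hU
  set ε' := ε / (5 * C) with hε'def
  have hCpos : (0:ℝ) < C := by linarith
  have hε'pos : 0 < ε' := div_pos hε (by linarith)
  obtain ⟨δ₁, hδ₁, hδ₁prop⟩ := hA3 ε' hε'pos
  set δ := min δ₁ r with hδdef
  have hδ : 0 < δ := lt_min hδ₁ hr
  -- the key deterministic estimate
  have key : ∀ θ ∈ Θ, ‖θ - θs‖ < δ →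
      |∫ z, KL (p θ z) (PZ.bind (p θ)) ∂PZ| ≤ ε := by
    intro θ hθΘ hθδ
    haveI instq : IsProbabilityMeasure (PZ.bind (p θ)) := by
      constructor
      rw [Measure.bind_apply MeasurableSet.univ (hpmeas θ).aemeasurable]
      have : ∀ z, p θ z Set.univ = 1 := fun z => by
        haveI := hpprob θ z; exact measure_univ
      simp [this]
    have hθU : θ ∈ U := by
      apply hball
      rw [Metric.mem_ball, dist_eq_norm]
      exact lt_of_lt_of_le hθδ (min_le_right _ _)
    have hS : (⨆ z, TV (p θ z) (p θs z)) < ε' :=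
      hδ₁prop θ hθΘ (lt_of_lt_of_le hθδ (min_le_left _ _))
    have hTVz : ∀ z, TV (p θ z) (p θs z) ≤ ε' := by
      intro z
      refine le_trans (le_ciSup (f := fun z => TV (p θ z) (p θs z)) ?_ z) hS.le
      refine ⟨1, ?_⟩
      rintro x ⟨z', rfl⟩
      haveI := hpprob θ z'; haveI := hpprob θs z'
      exact TV_le_one _ _
    -- computation of the mixture measure on sets
    have hqA : ∀ A : Set Y, MeasurableSet A →
        ((PZ.bind (p θ)) A).toReal = ∫ z, ((p θ z) A).toReal ∂PZ := by
      intro A hA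
      rw [Measure.bind_apply hA (hpmeas θ).aemeasurable]
      refine (integral_toReal ((Measure.measurable_coe hA).comp (hpmeas θ)).aemeasurable
        (ae_of_all _ fun z => ?_)).symm
      haveI := hpprob θ z
      exact measure_lt_top _ _
    have hintA : ∀ A : Set Y, MeasurableSet A →
        Integrable (fun z => ((p θ z) A).toReal) PZ := by
      intro A hA
      refine Integrable.mono' (integrable_const 1)
        (((Measure.measurable_coe hA).comp (hpmeas θ)).ennreal_toReal).aestronglyMeasurable
        (ae_of_all _ fun z => ?_)
      haveI := hpprob θ z
      simpa [Real.norm_eq_abs, abs_of_nonneg ENNReal.toReal_nonneg] using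
        measure_toReal_le_one (p θ z) A
    have hgood : ∀ᵐ z ∂PZ, p θs z = pstar ∧ (p θ z ≪ PZ.bind (p θ) ∧
        ∀ᵐ y ∂(PZ.bind (p θ)), (p θ z).rnDeriv (PZ.bind (p θ)) y ≤ ENNReal.ofReal C) :=
      hA1.and (hA4' θ hθU hθΘ)
    have hKLz : ∀ᵐ z ∂PZ, KL (p θ z) (PZ.bind (p θ)) ∈ Set.Icc 0 (C * (2 * (2 * ε'))) := by
      filter_upwards [hgood] with z hz
      obtain ⟨hz1, hzac, hzbd⟩ := hz
      haveI := hpprob θ z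
      refine KL_le _ _ hC hzac hzbd ?_
      intro A hA
      have e1 : |((p θ z) A).toReal - (pstar A).toReal| ≤ ε' := by
        haveI := hpprob θs z
        rw [← hz1]
        exact le_trans (abs_le_TV _ _ hA) (hTVz z)
      have e2 : |((PZ.bind (p θ)) A).toReal - (pstar A).toReal| ≤ ε' := by
        rw [hqA A hA]
        have hconst : (pstar A).toReal = ∫ _, (pstar A).toReal ∂PZ := by
          simp
        rw [hconst, ← integral_sub (hintA A hA) (integrable_const _)]
        calc |∫ z', (((p θ z') A).toReal - (pstar A).toReal) ∂PZ|
            ≤ ∫ z', |((p θ z') A).toReal - (pstar A).toReal| ∂PZ := by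
              simpa [Real.norm_eq_abs] using
                norm_integral_le_integral_norm
                  (fun z' => ((p θ z') A).toReal - (pstar A).toReal) (μ := PZ)
          _ ≤ ∫ _, ε' ∂PZ := by
              refine integral_mono_ae ((hintA A hA).sub (integrable_const _)).abs
                (integrable_const _) ?_
              filter_upwards [hA1] with z' hz'
              haveI := hpprob θ z'
              haveI := hpprob θs z'
              rw [← hz']
              exact le_trans (abs_le_TV _ _ hA) (hTVz z')
          _ = ε' := by simp
      calc |((p θ z) A).toReal - ((PZ.bind (p θ)) A).toReal|
          ≤ |((p θ z) A).toReal - (pstar A).toReal| +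
            |(pstar A).toReal - ((PZ.bind (p θ)) A).toReal| := abs_sub_le _ _ _
        _ ≤ ε' + ε' := by
            refine add_le_add e1 ?_
            rw [abs_sub_comm]; exact e2
        _ = 2 * ε' := by ring
    have hfinal : C * (2 * (2 * ε')) ≤ ε := by
      rw [hε'def]
      rw [div_eq_mul_inv]
      have : C * (2 * (2 * (ε * (5 * C)⁻¹))) = (4/5) * ε := by
        field_simp; ring
      rw [this]; linarith
    by_cases hint : Integrable (fun z => KL (p θ z) (PZ.bind (p θ))) PZ
    · calc |∫ z, KL (p θ z) (PZ.bind (p θ)) ∂PZ|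
          ≤ ∫ z, |KL (p θ z) (PZ.bind (p θ))| ∂PZ := by
            simpa [Real.norm_eq_abs] using
              norm_integral_le_integral_norm (fun z => KL (p θ z) (PZ.bind (p θ))) (μ := PZ)
        _ ≤ ∫ _, C * (2 * (2 * ε')) ∂PZ := by
            refine integral_mono_ae hint.abs (integrable_const _) ?_
            filter_upwards [hKLz] with z hz
            rw [abs_of_nonneg hz.1]; exact hz.2
        _ = C * (2 * (2 * ε')) := by simp
        _ ≤ ε := hfinal
    · rw [integral_undef hint]
      simpa using hε.le
  -- conclude via (A2)
  have hsub : ∀ n, {ω | ε < |∫ z, KL (p (θhat n ω) z) (PZ.bind (p (θhat n ω))) ∂PZ|}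
      ⊆ {ω | δ / 2 < ‖θhat n ω - θs‖} := by
    intro n ω hω
    simp only [Set.mem_setOf_eq] at hω ⊢
    by_contra hcon
    push_neg at hcon
    have hlt : ‖θhat n ω - θs‖ < δ := lt_of_le_of_lt hcon (by linarith)
    exact absurd (key (θhat n ω) (hθhatΘ n ω) hlt) (not_le.mpr hω)
  refine tendsto_of_tendsto_of_tendsto_of_le_of_le tendsto_const_nhds
    (hA2 (δ / 2) (by linarith)) (fun n => zero_le) (fun n => measure_mono (hsub n))
end

section
/- Let ν be a σ-finite measure on a measurable space 𝒴, let p_1, …, p_n be probability measures with p_z ≪ ν and densities f_z := dp_z/dν, let w_1, …, w_n > 0 with Σ w_z = 1, and let p̄ := Σ_z w_z·p_z with density f̄ = Σ_z w_z·f_z. Assume the differential entropies H(p̄) and H(p_z), and the divergences KL(p_z ‖ p̄), are all finite for z = 1, …, n. Then H(p̄) = Σ_z w_z·H(p_z) + Σ_z w_z·KL(p_z ‖ p̄); that is, the entropy of a finite mixture decomposes as the weighted average of the component entropies plus the expected Kullback–Leibler divergence of the components from the mixture. -/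
open MeasureTheory
open scoped ENNReal NNReal

/-- Differential entropy of `p` with respect to the reference measure `ν`:
`H(p) := -∫ f log f dν` where `f = dp/dν`. -/
noncomputable def Hent {Y : Type*} [MeasurableSpace Y] (ν p : Measure Y) : ℝ :=
  -∫ y, (p.rnDeriv ν y).toReal * Real.log (p.rnDeriv ν y).toReal ∂ν

lemma aux_real (a b : ℝ) :
    b * (a * Real.log a) = a * b * Real.log (a * b) - a * b * Real.log b := by
  rcases eq_or_ne a 0 with ha | ha
  · simp [ha]
  rcases eq_or_ne b 0 with hb | hb
  · simp [hb]
  rw [Real.log_mul ha hb]; ring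

lemma aux_rnDeriv_sum {Y : Type*} [MeasurableSpace Y] (ν : Measure Y) [SigmaFinite ν]
    {ι : Type*} (s : Finset ι) (μ : ι → Measure Y) [∀ i, IsFiniteMeasure (μ i)] :
    (∑ i ∈ s, μ i).rnDeriv ν =ᵐ[ν] fun y => ∑ i ∈ s, (μ i).rnDeriv ν y := by
  classical
  induction s using Finset.induction_on with
  | empty =>
      simp only [Finset.sum_empty]
      exact Measure.rnDeriv_zero ν
  | @insert a s hx ih =>
      haveI : IsFiniteMeasure (∑ i ∈ s, μ i) :=
        ⟨by rw [Measure.finset_sum_apply]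
            exact ENNReal.sum_lt_top.2 fun i _ => measure_lt_top _ _⟩
      rw [Finset.sum_insert hx]
      filter_upwards [Measure.rnDeriv_add' (μ a) (∑ i ∈ s, μ i) ν, ih] with y hy1 hy2
      rw [hy1, Pi.add_apply, hy2, Finset.sum_insert hx]

/-- the differential entropy of a finite mixture `p̄ = Σ_z w_z p_z`
of probability measures `p_z ≪ ν` (weights `w_z > 0` summing to 1) decomposes as
`H(p̄) = Σ_z w_z H(p_z) + Σ_z w_z KL(p_z ‖ p̄)`, provided all the entropies and
divergences involved are finite (encoded as integrability of the integrands). -/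
theorem stmt10 {Y : Type*} [MeasurableSpace Y] (ν : Measure Y) [SigmaFinite ν]
    (n : ℕ) (p : Fin n → Measure Y) (hprob : ∀ z, IsProbabilityMeasure (p z))
    (hac : ∀ z, p z ≪ ν)
    (w : Fin n → NNReal) (hw : ∀ z, 0 < w z) (hws : ∑ z, w z = 1)
    (pbar : Measure Y) (hpbar : pbar = ∑ z, w z • p z)
    (hHbar : Integrable
      (fun y => (pbar.rnDeriv ν y).toReal * Real.log (pbar.rnDeriv ν y).toReal) ν)
    (hHz : ∀ z, Integrable
      (fun y => ((p z).rnDeriv ν y).toReal * Real.log ((p z).rnDeriv ν y).toReal) ν)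
    (hKLz : ∀ z, Integrable
      (fun y => ((p z).rnDeriv pbar y).toReal * Real.log ((p z).rnDeriv pbar y).toReal)
      pbar) :
    Hent ν pbar = ∑ z, (w z : ℝ) * Hent ν (p z) + ∑ z, (w z : ℝ) * KL (p z) pbar := by
  classical
  haveI := fun z => hprob z
  -- pbar is a probability measure
  haveI hpbar_prob : IsProbabilityMeasure pbar := by
    constructor
    rw [hpbar]
    simp only [Measure.finset_sum_apply, Measure.smul_apply, measure_univ, ENNReal.smul_def,
      smul_eq_mul, mul_one]
    rw [← ENNReal.coe_finset_sum, hws, ENNReal.coe_one]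
  -- pbar ≪ ν
  have hbar_ac : pbar ≪ ν := by
    rw [hpbar]
    intro s hs
    simp only [Measure.finset_sum_apply, Measure.smul_apply]
    exact Finset.sum_eq_zero fun z _ => by rw [hac z hs]; simp
  -- each p z ≪ pbar
  have h_ac_bar : ∀ z, p z ≪ pbar := by
    intro z s hs
    rw [hpbar] at hs
    simp only [Measure.finset_sum_apply, Measure.smul_apply, ENNReal.smul_def,
      smul_eq_mul] at hs
    have h1 := (Finset.sum_eq_zero_iff.1 hs) z (Finset.mem_univ z)
    rcases mul_eq_zero.1 h1 with h | h
    · exact absurd (ENNReal.coe_eq_zero.1 h) (hw z).ne'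
    · exact h
  -- density of pbar is the weighted sum of densities
  have hF_sum : pbar.rnDeriv ν =ᵐ[ν] fun y => ∑ z, (w z : ℝ≥0∞) * (p z).rnDeriv ν y := by
    have h1 := aux_rnDeriv_sum ν Finset.univ (fun z => (w z • p z : Measure Y))
    have h2 : ∀ᵐ y ∂ν, ∀ z, ((w z • p z : Measure Y)).rnDeriv ν y
        = (w z : ℝ≥0∞) * (p z).rnDeriv ν y := by
      rw [MeasureTheory.ae_all_iff]
      intro z
      filter_upwards [Measure.rnDeriv_smul_left' (p z) ν (w z)] with y hy
      rw [hy, Pi.smul_apply, ENNReal.smul_def, smul_eq_mul]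
    rw [hpbar]
    filter_upwards [h1, h2] with y hy1 hy2
    rw [hy1]
    exact Finset.sum_congr rfl fun z _ => hy2 z
  -- per-component KL rewriting
  have hae : ∀ z, (fun y => (pbar.rnDeriv ν y).toReal *
        (((p z).rnDeriv pbar y).toReal * Real.log ((p z).rnDeriv pbar y).toReal))
      =ᵐ[ν] fun y => ((p z).rnDeriv ν y).toReal * Real.log ((p z).rnDeriv ν y).toReal
           - ((p z).rnDeriv ν y).toReal * Real.log ((pbar.rnDeriv ν y).toReal) := by
    intro z
    filter_upwards [Measure.rnDeriv_mul_rnDeriv (h_ac_bar z) (κ := ν)] with y hy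
    rw [← hy, Pi.mul_apply, ENNReal.toReal_mul]
    exact aux_real _ _
  have hInt_ν : ∀ z, Integrable (fun y => (pbar.rnDeriv ν y).toReal *
      (((p z).rnDeriv pbar y).toReal * Real.log ((p z).rnDeriv pbar y).toReal)) ν := by
    intro z
    have := (MeasureTheory.integrable_rnDeriv_smul_iff (μ := pbar) (ν := ν)
      (f := fun y => ((p z).rnDeriv pbar y).toReal * Real.log ((p z).rnDeriv pbar y).toReal)
      hbar_ac).2 (hKLz z)
    simpa [smul_eq_mul] using this
  have hInt2 : ∀ z, Integrable
      (fun y => ((p z).rnDeriv ν y).toReal * Real.log ((pbar.rnDeriv ν y).toReal)) ν := by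
    intro z
    have h := (hHz z).sub ((hInt_ν z).congr (hae z))
    refine h.congr (Filter.Eventually.of_forall fun y => ?_)
    simp only [Pi.sub_apply]
    ring
  have hKL_eq : ∀ z, KL (p z) pbar
      = ∫ y, ((p z).rnDeriv ν y).toReal * Real.log ((p z).rnDeriv ν y).toReal ∂ν
        - ∫ y, ((p z).rnDeriv ν y).toReal * Real.log ((pbar.rnDeriv ν y).toReal) ∂ν := by
    intro z
    have h1 : KL (p z) pbar = ∫ y, (pbar.rnDeriv ν y).toReal *
        (((p z).rnDeriv pbar y).toReal * Real.log ((p z).rnDeriv pbar y).toReal) ∂ν := by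
      rw [KL]
      rw [← MeasureTheory.integral_rnDeriv_smul (μ := pbar) (ν := ν) hbar_ac]
      simp [smul_eq_mul]
    rw [h1, integral_congr_ae (hae z), integral_sub (hHz z) (hInt2 z)]
  -- final assembly
  have hsum_ae : (fun y => ∑ z, (w z : ℝ) *
        (((p z).rnDeriv ν y).toReal * Real.log ((pbar.rnDeriv ν y).toReal)))
      =ᵐ[ν] fun y => (pbar.rnDeriv ν y).toReal * Real.log ((pbar.rnDeriv ν y).toReal) := by
    have hfin : ∀ᵐ y ∂ν, ∀ z, (p z).rnDeriv ν y < ∞ :=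
      MeasureTheory.ae_all_iff.2 fun z => Measure.rnDeriv_lt_top (p z) ν
    filter_upwards [hF_sum, hfin] with y hy hfy
    rw [hy]
    rw [ENNReal.toReal_sum (fun z _ => by
      exact ENNReal.mul_ne_top ENNReal.coe_ne_top (hfy z).ne)]
    rw [Finset.sum_mul]
    refine Finset.sum_congr rfl fun z _ => ?_
    rw [ENNReal.toReal_mul, ENNReal.coe_toReal]
    ring
  have key : ∑ z, (w z : ℝ) * Hent ν (p z) + ∑ z, (w z : ℝ) * KL (p z) pbar
      = - ∑ z, (w z : ℝ) * ∫ y, ((p z).rnDeriv ν y).toReal *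
          Real.log ((pbar.rnDeriv ν y).toReal) ∂ν := by
    rw [← Finset.sum_add_distrib, ← Finset.sum_neg_distrib]
    refine Finset.sum_congr rfl fun z _ => ?_
    rw [hKL_eq z, Hent]
    ring
  rw [key]
  have : ∑ z, (w z : ℝ) * ∫ y, ((p z).rnDeriv ν y).toReal *
        Real.log ((pbar.rnDeriv ν y).toReal) ∂ν
      = ∫ y, (pbar.rnDeriv ν y).toReal * Real.log ((pbar.rnDeriv ν y).toReal) ∂ν := by
    rw [← integral_congr_ae hsum_ae, integral_finset_sum _ (fun z _ => ((hInt2 z).const_mul _))]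
    exact Finset.sum_congr rfl fun z _ => (integral_const_mul _ _).symm
  rw [this, Hent]
end

section
/- Let ν be a σ-finite measure on a measurable space 𝒴 and let p := Σ_{i=1}^K π_i·p_i be a finite mixture of probability measures p_i ≪ ν with densities f_i := dp_i/dν and weights π_i > 0 summing to 1, with mixture density f = Σ_i π_i·f_i. Suppose each overlap integral ∫ f_i·f_j dν is finite and each Σ_j π_j ∫ f_i f_j dν is strictly positive, and that the differential entropy H(p) exists. Then H(p) ≥ −Σ_{i=1}^K π_i·log(Σ_{j=1}^K π_j·∫ f_i·f_j dν). -/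
open MeasureTheory

/-- general mixture entropy lower bound: let `p = Σ_i w_i p_i` be a
finite mixture of probability measures `p_i ≪ ν` with densities `f_i = dp_i/dν` and
positive weights summing to 1, with mixture density `F = Σ_i w_i f_i`. If each overlap
integral `∫ f_i f_j dν` is finite, each `Σ_j w_j ∫ f_i f_j dν` is strictly positive,
and the differential entropy `H(p) = -∫ F log F dν` exists (the integrand is
integrable), then `H(p) ≥ -Σ_i w_i log(Σ_j w_j ∫ f_i f_j dν)`. -/
theorem stmt13 {Y : Type*} [MeasurableSpace Y] (ν : Measure Y) [SigmaFinite ν]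
    (K : ℕ) (p : Fin K → Measure Y) (hprob : ∀ i, IsProbabilityMeasure (p i))
    (hac : ∀ i, p i ≪ ν)
    (w : Fin K → ℝ) (hw : ∀ i, 0 < w i) (hws : ∑ i, w i = 1)
    (f : Fin K → Y → ℝ) (hf : ∀ i, f i = fun y => ((p i).rnDeriv ν y).toReal)
    (hoverlap : ∀ i j, Integrable (fun y => f i y * f j y) ν)
    (hpos : ∀ i, 0 < ∑ j, w j * ∫ y, f i y * f j y ∂ν)
    (hent : Integrable
      (fun y => (∑ i, w i * f i y) * Real.log (∑ i, w i * f i y)) ν) :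
    -∫ y, (∑ i, w i * f i y) * Real.log (∑ i, w i * f i y) ∂ν ≥
      -∑ i, w i * Real.log (∑ j, w j * ∫ y, f i y * f j y ∂ν) := by
  set F : Y → ℝ := fun y => ∑ i, w i * f i y with hFdef
  set a : Fin K → ℝ := fun i => ∑ j, w j * ∫ y, f i y * f j y ∂ν with hadef
  have hfm : ∀ i, Measurable (f i) := by
    intro i; rw [hf i]; exact (Measure.measurable_rnDeriv _ _).ennreal_toReal
  have hf0 : ∀ i y, 0 ≤ f i y := by
    intro i y; rw [hf i]; exact ENNReal.toReal_nonneg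
  have hFm : Measurable F := by
    apply Finset.measurable_sum
    intro i _; exact (hfm i).const_mul _
  have hfi : ∀ i, Integrable (f i) ν := by
    intro i; rw [hf i]; exact Measure.integrable_toReal_rnDeriv
  have hfint : ∀ i, ∫ y, f i y ∂ν = 1 := by
    intro i
    rw [hf i, Measure.integral_toReal_rnDeriv (hac i)]
    simp
  have hle : ∀ i y, w i * f i y ≤ F y := by
    intro i y
    exact Finset.single_le_sum (fun j _ => mul_nonneg (hw j).le (hf0 j y))
      (Finset.mem_univ i)
  -- integrability of f i * log F
  have hgi : ∀ i, Integrable (fun y => f i y * Real.log (F y)) ν := by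
    intro i
    refine Integrable.mono (hent.const_mul (w i)⁻¹)
      ((hfm i).mul (hFm.log)).aestronglyMeasurable ?_
    filter_upwards with y
    have h1 : f i y ≤ (w i)⁻¹ * F y :=
      calc f i y = (w i)⁻¹ * (w i * f i y) := by
            rw [← mul_assoc, inv_mul_cancel₀ (hw i).ne', one_mul]
        _ ≤ (w i)⁻¹ * F y :=
            mul_le_mul_of_nonneg_left (hle i y) (inv_pos.mpr (hw i)).le
    have hF0 : 0 ≤ F y := Finset.sum_nonneg fun j _ => mul_nonneg (hw j).le (hf0 j y)
    show ‖f i y * Real.log (F y)‖ ≤ ‖(w i)⁻¹ * (F y * Real.log (F y))‖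
    simp only [Real.norm_eq_abs, abs_mul, abs_of_nonneg (hf0 i y), abs_of_nonneg hF0,
      abs_of_pos (inv_pos.mpr (hw i))]
    calc f i y * |Real.log (F y)| ≤ ((w i)⁻¹ * F y) * |Real.log (F y)| :=
          mul_le_mul_of_nonneg_right h1 (abs_nonneg _)
      _ = (w i)⁻¹ * (F y * |Real.log (F y)|) := by ring
  -- f i * F integrable and its integral
  have hfiF : ∀ i, Integrable (fun y => f i y * F y) ν := by
    intro i
    have : (fun y => f i y * F y) = fun y => ∑ j, w j * (f i y * f j y) := by
      funext y; rw [hFdef]; rw [Finset.mul_sum]; congr 1; funext j; ring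
    rw [this]
    exact integrable_finset_sum _ fun j _ => (hoverlap i j).const_mul _
  have hfiFint : ∀ i, ∫ y, f i y * F y ∂ν = a i := by
    intro i
    have h1 : (fun y => f i y * F y) = fun y => ∑ j, w j * (f i y * f j y) := by
      funext y; rw [hFdef]; rw [Finset.mul_sum]; congr 1; funext j; ring
    rw [h1, integral_finset_sum _ fun j _ => (hoverlap i j).const_mul _]
    simp_rw [integral_const_mul]
    rfl
  -- Jensen-type bound
  have hjensen : ∀ i, ∫ y, f i y * Real.log (F y) ∂ν ≤ Real.log (a i) := by
    intro i
    have hai : 0 < a i := hpos i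
    have hInt1 : Integrable (fun y => f i y * F y / a i - f i y) ν :=
      ((hfiF i).div_const _).sub (hfi i)
    have hInt2 : Integrable
        (fun y => f i y * F y / a i - f i y + f i y * Real.log (a i)) ν :=
      hInt1.add ((hfi i).mul_const _)
    have hmono : ∫ y, f i y * Real.log (F y) ∂ν ≤
        ∫ y, f i y * F y / a i - f i y + f i y * Real.log (a i) ∂ν := by
      apply integral_mono (hgi i) hInt2
      intro y
      rcases eq_or_lt_of_le (hf0 i y) with h0 | h0
      · simp [← h0]
      · have hFy : 0 < F y := lt_of_lt_of_le (mul_pos (hw i) h0) (hle i y)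
        have hlog : Real.log (F y) ≤ F y / a i - 1 + Real.log (a i) := by
          have := Real.log_le_sub_one_of_pos (div_pos hFy hai)
          rw [Real.log_div hFy.ne' hai.ne'] at this
          linarith
        have := mul_le_mul_of_nonneg_left hlog (hf0 i y)
        calc f i y * Real.log (F y) ≤ f i y * (F y / a i - 1 + Real.log (a i)) := this
          _ = f i y * F y / a i - f i y + f i y * Real.log (a i) := by ring
    rw [integral_add hInt1 ((hfi i).mul_const _),
      integral_sub ((hfiF i).div_const _) (hfi i), integral_div, hfiFint i,
      integral_mul_const, hfint i, div_self hai.ne'] at hmono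
    linarith
  -- split the entropy integral
  have hsplit : ∫ y, F y * Real.log (F y) ∂ν =
      ∑ i, w i * ∫ y, f i y * Real.log (F y) ∂ν := by
    have h1 : (fun y => F y * Real.log (F y)) =
        fun y => ∑ i, w i * (f i y * Real.log (F y)) := by
      funext y; rw [hFdef]; rw [Finset.sum_mul]; congr 1; funext i; ring
    rw [h1, integral_finset_sum _ fun i _ => (hgi i).const_mul _]
    simp_rw [integral_const_mul]
  rw [ge_iff_le, neg_le_neg_iff]
  calc ∫ y, F y * Real.log (F y) ∂ν = ∑ i, w i * ∫ y, f i y * Real.log (F y) ∂ν := hsplit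
    _ ≤ ∑ i, w i * Real.log (a i) :=
        Finset.sum_le_sum fun i _ => mul_le_mul_of_nonneg_left (hjensen i) (hw i).le
end

section
/- Let p(y) = Σ_{i=1}^K π_i·N(y; μ_i, C_i) be a Gaussian mixture density on ℝ^N with weights π_i > 0 summing to 1, means μ_i ∈ ℝ^N, and symmetric positive definite covariance matrices C_i ∈ ℝ^{N×N}. Then the differential entropy of p with respect to Lebesgue measure on ℝ^N satisfies H(p) ≥ −Σ_{i=1}^K π_i·log(Σ_{j=1}^K π_j·N(μ_i; μ_j, C_i + C_j)), where N(μ_i; μ_j, C_i + C_j) is the multivariate normal density with mean μ_j and covariance C_i + C_j evaluated at μ_i. -/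
open MeasureTheory Matrix Real

/-- Density at `y ∈ ℝ^N` of the multivariate normal distribution with mean `μ` and
(symmetric positive definite) covariance `C`:
`N(y; μ, C) = (2π)^{-N/2} (det C)^{-1/2} exp(-(1/2)(y-μ)ᵀ C⁻¹ (y-μ))`. -/
noncomputable def gaussPdf {N : ℕ} (μ : Fin N → ℝ) (C : Matrix (Fin N) (Fin N) ℝ)
    (y : Fin N → ℝ) : ℝ :=
  (2 * Real.pi) ^ (-(N : ℝ) / 2) * C.det ^ (-(1 : ℝ) / 2) *
    Real.exp (-(1 / 2) * dotProduct (y - μ) (C⁻¹.mulVec (y - μ)))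

/-- Differential entropy of a probability density `f` on `ℝ^N` with respect to
Lebesgue measure: `H(f) := -∫ f log f dy`. -/
noncomputable def Hd {N : ℕ} (f : (Fin N → ℝ) → ℝ) : ℝ :=
  -∫ y, f y * Real.log (f y)


variable {N : ℕ}


lemma posDef_add {A B : Matrix (Fin N) (Fin N) ℝ} (hA : A.PosDef) (hB : B.PosDef) :
    (A + B).PosDef := by
  refine Matrix.PosDef.of_dotProduct_mulVec_pos (hA.1.add hB.1) fun x hx => ?_
  have := add_pos (hA.dotProduct_mulVec_pos hx) (hB.dotProduct_mulVec_pos hx)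
  simpa [Matrix.add_mulVec, dotProduct_add] using this

lemma qf_pos {A : Matrix (Fin N) (Fin N) ℝ} (hA : A.PosDef) {x : Fin N → ℝ} (hx : x ≠ 0) :
    0 < x ⬝ᵥ A *ᵥ x := by
  simpa using hA.dotProduct_mulVec_pos hx

lemma qf_nonneg {A : Matrix (Fin N) (Fin N) ℝ} (hA : A.PosDef) (x : Fin N → ℝ) :
    0 ≤ x ⬝ᵥ A *ᵥ x := by
  rcases eq_or_ne x 0 with h | h
  · simp [h]
  · exact (qf_pos hA h).le

lemma dot_mulVec_symm {A : Matrix (Fin N) (Fin N) ℝ} (hA : Aᵀ = A) (x y : Fin N → ℝ) :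
    x ⬝ᵥ A *ᵥ y = y ⬝ᵥ A *ᵥ x := by
  rw [Matrix.dotProduct_mulVec, ← Matrix.mulVec_transpose, hA, dotProduct_comm]

lemma herm_transpose {A : Matrix (Fin N) (Fin N) ℝ} (hA : A.IsHermitian) : Aᵀ = A := by
  simpa using hA.eq
lemma posDef_smul {A : Matrix (Fin N) (Fin N) ℝ} (hA : A.PosDef) {c : ℝ} (hc : 0 < c) :
    (c • A).PosDef := by
  refine Matrix.PosDef.of_dotProduct_mulVec_pos ?_ fun x hx => ?_
  · simp [Matrix.IsHermitian, Matrix.conjTranspose_smul, herm_transpose hA.1]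
  · have := hA.dotProduct_mulVec_pos hx
    simp only [Matrix.smul_mulVec, dotProduct_smul, smul_eq_mul, star_trivial] at *
    exact mul_pos hc this


-- standard gaussian on pi space
lemma std_gauss_int :
    Integrable (fun z : Fin N → ℝ => Real.exp (-(1/2) * z ⬝ᵥ z)) ∧
    ∫ z : Fin N → ℝ, Real.exp (-(1/2) * z ⬝ᵥ z) = (2 * π) ^ ((N : ℝ)/2) := by
  have hprod : ∀ z : Fin N → ℝ, Real.exp (-(1/2) * z ⬝ᵥ z)
      = ∏ i, Real.exp (-(1/2) * (z i)^2) := by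
    intro z
    rw [← Real.exp_sum]
    congr 1
    simp [dotProduct, Finset.mul_sum, sq]
  have h1 : Integrable (fun x : ℝ => Real.exp (-(1/2) * x^2)) := by
    simpa using integrable_exp_neg_mul_sq (by norm_num : (0:ℝ) < 1/2)
  constructor
  · simp only [hprod]
    exact Integrable.fintype_prod (fun _ => h1)
  · simp only [hprod]
    rw [MeasureTheory.volume_pi, MeasureTheory.integral_fintype_prod_eq_pow (ι := Fin N) (fun x : ℝ => Real.exp (-(1/2) * x^2))]
    have : ∫ x : ℝ, Real.exp (-(1/2) * x^2) = Real.sqrt (2 * π) := by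
      rw [show (2:ℝ)*π = π / (1/2) by ring]
      simpa [neg_mul] using integral_gaussian (1/2)
    rw [this, Fintype.card_fin]
    rw [Real.sqrt_eq_rpow, ← Real.rpow_natCast ((2*π) ^ ((1:ℝ)/2)) N, ← Real.rpow_mul (by positivity)]
    ring_nf

open scoped MatrixOrder in
lemma sqrt_facts {A : Matrix (Fin N) (Fin N) ℝ} (hA : A.PosDef) :
    ∃ B : Matrix (Fin N) (Fin N) ℝ, Bᵀ = B ∧ 0 < B.det ∧ B.det = A.det ^ (-(1:ℝ)/2) ∧
      (∀ z : Fin N → ℝ, (B *ᵥ z) ⬝ᵥ A *ᵥ (B *ᵥ z) = z ⬝ᵥ z) := by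
  have hAi : A⁻¹.PosDef := hA.inv
  set B := CFC.sqrt A⁻¹ with hBdef
  have hB : B.PosSemidef := (CFC.sqrt_nonneg A⁻¹).posSemidef
  have hBB : B * B = A⁻¹ := CFC.sqrt_mul_sqrt_self A⁻¹ hAi.posSemidef.nonneg
  have hBt : Bᵀ = B := by simpa using hB.1.eq
  have hdetA : 0 < A.det := hA.det_pos
  have hdetBB : B.det * B.det = (A.det)⁻¹ := by
    rw [← Matrix.det_mul, hBB, Matrix.det_nonsing_inv, Ring.inverse_eq_inv']
  have hdetBnn : 0 ≤ B.det := by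
    rw [hB.1.det_eq_prod_eigenvalues]
    exact Finset.prod_nonneg fun i _ => by exact_mod_cast hB.eigenvalues_nonneg i
  have hdetB : B.det = A.det ^ (-(1:ℝ)/2) := by
    have h1 : B.det = Real.sqrt (A.det)⁻¹ := by
      rw [← hdetBB, Real.sqrt_mul_self hdetBnn]
    rw [h1, show (-(1:ℝ)/2) = (-1) * (1/2) by ring, Real.rpow_mul hdetA.le,
      Real.rpow_neg_one, Real.sqrt_eq_rpow]
  have hdetBpos : 0 < B.det := by
    rw [hdetB]; positivity
  refine ⟨B, hBt, hdetBpos, hdetB, fun z => ?_⟩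
  have hABB : A * (B * B) = 1 := by rw [hBB]; exact Matrix.mul_nonsing_inv A hA.det_pos.ne'.isUnit
  have hBne : IsUnit B.det := hdetBpos.ne'.isUnit
  have hBAB : B * A * B = 1 := by
    have h3 : B * A * B * B = B := by
      rw [Matrix.mul_assoc, Matrix.mul_assoc, hABB, Matrix.mul_one]
    have h4 := congrArg (· * B⁻¹) h3
    simpa [Matrix.mul_assoc, Matrix.mul_nonsing_inv _ hBne] using h4
  calc (B *ᵥ z) ⬝ᵥ A *ᵥ (B *ᵥ z) = (B *ᵥ z) ⬝ᵥ ((A * B) *ᵥ z) := by rw [Matrix.mulVec_mulVec]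
    _ = ((A * B)ᵀ *ᵥ (B *ᵥ z)) ⬝ᵥ z := by
        rw [Matrix.dotProduct_mulVec, ← Matrix.mulVec_transpose, dotProduct_comm]
    _ = (((A * B)ᵀ * B) *ᵥ z) ⬝ᵥ z := by rw [Matrix.mulVec_mulVec]
    _ = z ⬝ᵥ z := by
        have : (A * B)ᵀ * B = 1 := by
          rw [Matrix.transpose_mul, hBt, herm_transpose hA.1, Matrix.mul_assoc, ← Matrix.mul_assoc, hBAB]
        rw [this, Matrix.one_mulVec]


set_option maxHeartbeats 800000 in
lemma integral_exp_qf {A : Matrix (Fin N) (Fin N) ℝ} (hA : A.PosDef) :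
    Integrable (fun x : Fin N → ℝ => Real.exp (-(1/2) * x ⬝ᵥ A *ᵥ x)) ∧
    ∫ x : Fin N → ℝ, Real.exp (-(1/2) * x ⬝ᵥ A *ᵥ x)
      = (2 * π) ^ ((N : ℝ)/2) * A.det ^ (-(1:ℝ)/2) := by
  obtain ⟨B, hBt, hBdet, hBdetval, hBq⟩ := sqrt_facts hA
  set g : (Fin N → ℝ) → ℝ := fun x => Real.exp (-(1/2) * x ⬝ᵥ A *ᵥ x) with hg
  set f : (Fin N → ℝ) →ₗ[ℝ] (Fin N → ℝ) := Matrix.toLin' B with hf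
  have hfdet : LinearMap.det f = B.det := by
    rw [hf]; exact LinearMap.det_toLin' B
  have hmap : Measure.map f volume = ENNReal.ofReal |(B.det)⁻¹| • volume := by
    rw [← hfdet]
    exact Real.map_linearMap_volume_pi_eq_smul_volume_pi (by rw [hfdet]; exact hBdet.ne')
  have hgcont : Continuous g := by
    apply Real.continuous_exp.comp
    apply Continuous.mul continuous_const
    unfold dotProduct Matrix.mulVec
    exact continuous_finset_sum _ fun i _ => (continuous_apply i).mul
      (continuous_finset_sum _ fun j _ => (continuous_const.mul (continuous_apply j)))
  have hfcont : Continuous f := LinearMap.continuous_on_pi f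
  have hcomp : (fun x => g (f x)) = fun x : Fin N → ℝ => Real.exp (-(1/2) * x ⬝ᵥ x) := by
    funext x
    simp only [hg, hf, Matrix.toLin'_apply, hBq]
  have hsm : AEStronglyMeasurable g (Measure.map f volume) := (hgcont.aestronglyMeasurable)
  have hint_comp : Integrable (fun x => g (f x)) := by
    rw [hcomp]; exact std_gauss_int.1
  have hint_map : Integrable g (Measure.map f volume) :=
    (integrable_map_measure hsm hfcont.aemeasurable).mpr hint_comp
  have hc_ne0 : ENNReal.ofReal |(B.det)⁻¹| ≠ 0 := by
    simp only [ne_eq, ENNReal.ofReal_eq_zero, not_le, abs_pos]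
    positivity
  have hc_net : ENNReal.ofReal |(B.det)⁻¹| ≠ ⊤ := ENNReal.ofReal_ne_top
  have hint : Integrable g := by
    rw [hmap] at hint_map
    exact (integrable_smul_measure hc_ne0 hc_net).mp hint_map
  refine ⟨hint, ?_⟩
  have h1 : ∫ x, g (f x) = ∫ y, g y ∂(Measure.map f volume) :=
    (integral_map hfcont.aemeasurable hsm).symm
  rw [hcomp] at h1
  rw [std_gauss_int.2] at h1
  rw [hmap, integral_smul_measure] at h1
  rw [abs_of_pos (by positivity : (0:ℝ) < (B.det)⁻¹), ENNReal.toReal_ofReal (by positivity)] at h1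
  -- h1 : (2π)^(N/2) = (B.det)⁻¹ • ∫ g
  have : ∫ y, g y = B.det * (2 * π) ^ ((N : ℝ)/2) := by
    rw [h1, smul_eq_mul, ← mul_assoc, mul_inv_cancel₀ hBdet.ne', one_mul]
  rw [this, hBdetval]; ring

lemma exp_qf_shift {A : Matrix (Fin N) (Fin N) ℝ} (hA : A.PosDef) (v : Fin N → ℝ) :
    Integrable (fun y : Fin N → ℝ => Real.exp (-(1/2) * (y - v) ⬝ᵥ A *ᵥ (y - v))) ∧
    ∫ y : Fin N → ℝ, Real.exp (-(1/2) * (y - v) ⬝ᵥ A *ᵥ (y - v))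
      = (2 * π) ^ ((N : ℝ)/2) * A.det ^ (-(1:ℝ)/2) := by
  obtain ⟨hint, hval⟩ := integral_exp_qf hA
  constructor
  · exact hint.comp_sub_right v
  · rw [integral_sub_right_eq_self (fun x : Fin N → ℝ => Real.exp (-(1/2) * x ⬝ᵥ A *ᵥ x)) v]
    exact hval

lemma gaussPdf_eq (μ0 : Fin N → ℝ) (C : Matrix (Fin N) (Fin N) ℝ) (y : Fin N → ℝ) :
    gaussPdf μ0 C y = (2 * π) ^ (-(N : ℝ) / 2) * C.det ^ (-(1 : ℝ)/2) *
      Real.exp (-(1/2) * (y - μ0) ⬝ᵥ C⁻¹ *ᵥ (y - μ0)) := rfl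

lemma gaussPdf_integrable {μ0 : Fin N → ℝ} {C : Matrix (Fin N) (Fin N) ℝ} (hC : C.PosDef) :
    Integrable (gaussPdf μ0 C) := by
  have h := (exp_qf_shift hC.inv μ0).1
  exact h.const_mul ((2 * π) ^ (-(N : ℝ) / 2) * C.det ^ (-(1 : ℝ)/2))

lemma integral_gaussPdf {μ0 : Fin N → ℝ} {C : Matrix (Fin N) (Fin N) ℝ} (hC : C.PosDef) :
    ∫ y, gaussPdf μ0 C y = 1 := by
  simp only [gaussPdf_eq]
  rw [MeasureTheory.integral_const_mul, (exp_qf_shift hC.inv μ0).2]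
  rw [Matrix.det_nonsing_inv, Ring.inverse_eq_inv']
  have hd : 0 < C.det := hC.det_pos
  have h2p : (0:ℝ) < 2 * π := by positivity
  rw [← Real.rpow_neg_one C.det]
  rw [← Real.rpow_mul hd.le]
  have : (2 * π) ^ (-(N:ℝ)/2) * C.det ^ (-(1:ℝ)/2) * ((2*π) ^ ((N:ℝ)/2) * C.det ^ ((-1:ℝ) * (-(1:ℝ)/2)))
      = ((2 * π) ^ (-(N:ℝ)/2) * (2*π) ^ ((N:ℝ)/2)) * (C.det ^ (-(1:ℝ)/2) * C.det ^ ((1:ℝ)/2)) := by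
    ring_nf
  rw [this, ← Real.rpow_add h2p, ← Real.rpow_add hd,
    show -(N:ℝ)/2 + (N:ℝ)/2 = 0 by ring, show (-(1:ℝ)/2 + 1/2 : ℝ) = 0 by ring,
    Real.rpow_zero, Real.rpow_zero, mul_one]

lemma gaussPdf_pos {μ0 : Fin N → ℝ} {C : Matrix (Fin N) (Fin N) ℝ} (hC : C.PosDef)
    (y : Fin N → ℝ) : 0 < gaussPdf μ0 C y := by
  rw [gaussPdf_eq]
  have := hC.det_pos
  positivity

lemma gaussPdf_le {μ0 : Fin N → ℝ} {C : Matrix (Fin N) (Fin N) ℝ} (hC : C.PosDef)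
    (y : Fin N → ℝ) : gaussPdf μ0 C y ≤ (2 * π) ^ (-(N:ℝ)/2) * C.det ^ (-(1:ℝ)/2) := by
  rw [gaussPdf_eq]
  have h1 : Real.exp (-(1/2) * (y - μ0) ⬝ᵥ C⁻¹ *ᵥ (y - μ0)) ≤ 1 := by
    rw [Real.exp_le_one_iff]
    have := qf_nonneg hC.inv (y - μ0)
    nlinarith
  have h2 : (0:ℝ) ≤ (2 * π) ^ (-(N:ℝ)/2) * C.det ^ (-(1:ℝ)/2) := by
    have := hC.det_pos
    positivity
  calc (2 * π) ^ (-(N:ℝ)/2) * C.det ^ (-(1:ℝ)/2) * Real.exp (-(1/2) * (y - μ0) ⬝ᵥ C⁻¹ *ᵥ (y - μ0))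
      ≤ (2 * π) ^ (-(N:ℝ)/2) * C.det ^ (-(1:ℝ)/2) * 1 := by
        exact mul_le_mul_of_nonneg_left h1 h2
    _ = _ := mul_one _



lemma dot_mulVec_flip (M : Matrix (Fin N) (Fin N) ℝ) (x y : Fin N → ℝ) :
    x ⬝ᵥ M *ᵥ y = y ⬝ᵥ Mᵀ *ᵥ x := by
  rw [Matrix.dotProduct_mulVec, ← Matrix.mulVec_transpose, dotProduct_comm]

lemma qf_sub_expand {A : Matrix (Fin N) (Fin N) ℝ} (hAt : Aᵀ = A) (x v : Fin N → ℝ) :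
    (x - v) ⬝ᵥ A *ᵥ (x - v) = x ⬝ᵥ A *ᵥ x - 2 * (x ⬝ᵥ A *ᵥ v) + v ⬝ᵥ A *ᵥ v := by
  rw [sub_dotProduct, Matrix.mulVec_sub, dotProduct_sub, dotProduct_sub,
    dot_mulVec_symm hAt v x]
  ring

lemma e_gen (M : Matrix (Fin N) (Fin N) ℝ) (u w : Fin N → ℝ) :
    (M *ᵥ u) ⬝ᵥ w = u ⬝ᵥ Mᵀ *ᵥ w := by
  rw [dotProduct_comm, dot_mulVec_flip]

lemma herm_transpose' {A : Matrix (Fin N) (Fin N) ℝ} (hA : A.IsHermitian) : Aᵀ = A := by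
  simpa using hA.eq

lemma quad_split {μ1 μ2 : Fin N → ℝ} {C1 C2 : Matrix (Fin N) (Fin N) ℝ}
    (h1 : C1.PosDef) (h2 : C2.PosDef)
    (h12 : (C1 + C2).PosDef) (hR : (C1⁻¹ + C2⁻¹).PosDef) (y : Fin N → ℝ) :
    (y - μ1) ⬝ᵥ C1⁻¹ *ᵥ (y - μ1) + (y - μ2) ⬝ᵥ C2⁻¹ *ᵥ (y - μ2)
      = (μ1 - μ2) ⬝ᵥ (C1 + C2)⁻¹ *ᵥ (μ1 - μ2)
        + (y - (C1⁻¹ + C2⁻¹)⁻¹ *ᵥ (C1⁻¹ *ᵥ μ1 + C2⁻¹ *ᵥ μ2)) ⬝ᵥ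
            (C1⁻¹ + C2⁻¹) *ᵥ (y - (C1⁻¹ + C2⁻¹)⁻¹ *ᵥ (C1⁻¹ *ᵥ μ1 + C2⁻¹ *ᵥ μ2)) := by
  set P := C1⁻¹ with hPdef
  set Q := C2⁻¹ with hQdef
  set R := P + Q with hRdef
  set T := (C1 + C2)⁻¹ with hTdef
  set b := P *ᵥ μ1 + Q *ᵥ μ2 with hbdef
  set m := R⁻¹ *ᵥ b with hmdef
  have hd1 : IsUnit C1.det := h1.det_pos.ne'.isUnit
  have hd2 : IsUnit C2.det := h2.det_pos.ne'.isUnit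
  have hdR : IsUnit R.det := hR.det_pos.ne'.isUnit
  have hPt : Pᵀ = P := herm_transpose' h1.inv.1
  have hQt : Qᵀ = Q := herm_transpose' h2.inv.1
  have hRt : Rᵀ = R := herm_transpose' hR.1
  have hRit : (R⁻¹)ᵀ = R⁻¹ := herm_transpose' hR.inv.1
  have hTt : Tᵀ = T := herm_transpose' h12.inv.1
  -- matrix identities
  have hCRC : C1 * R * C2 = C1 + C2 := by
    rw [hRdef, hPdef, hQdef, Matrix.mul_add, Matrix.mul_nonsing_inv _ hd1, Matrix.add_mul,
      Matrix.one_mul, Matrix.mul_assoc, Matrix.nonsing_inv_mul _ hd2, Matrix.mul_one, add_comm]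
  have hCRC2 : C2 * R * C1 = C1 + C2 := by
    rw [hRdef, hPdef, hQdef, Matrix.mul_add, Matrix.mul_nonsing_inv _ hd2, Matrix.add_mul,
      Matrix.one_mul, Matrix.mul_assoc, Matrix.nonsing_inv_mul _ hd1, Matrix.mul_one,
      add_comm C2 C1]
  have hTQRP : T = Q * R⁻¹ * P := by
    rw [hTdef, ← hCRC]
    apply Matrix.inv_eq_right_inv
    rw [hPdef, hQdef]
    rw [Matrix.mul_assoc (C1 * R) C2 _, Matrix.mul_assoc C2⁻¹ R⁻¹ C1⁻¹,
      Matrix.mul_nonsing_inv_cancel_left _ _ hd2, Matrix.mul_assoc C1 R _,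
      Matrix.mul_nonsing_inv_cancel_left _ _ hdR, Matrix.mul_nonsing_inv _ hd1]
  have hTPRQ : T = P * R⁻¹ * Q := by
    rw [hTdef, ← hCRC2]
    apply Matrix.inv_eq_right_inv
    rw [hPdef, hQdef]
    rw [Matrix.mul_assoc (C2 * R) C1 _, Matrix.mul_assoc C1⁻¹ R⁻¹ C2⁻¹,
      Matrix.mul_nonsing_inv_cancel_left _ _ hd1, Matrix.mul_assoc C2 R _,
      Matrix.mul_nonsing_inv_cancel_left _ _ hdR, Matrix.mul_nonsing_inv _ hd2]
  have key1 : P * R⁻¹ * P = P - T := by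
    have e2 : P * R⁻¹ * P + P * R⁻¹ * Q = P := by
      calc P * R⁻¹ * P + P * R⁻¹ * Q = P * R⁻¹ * (P + Q) := (Matrix.mul_add _ _ _).symm
        _ = P := by
            rw [← hRdef, Matrix.mul_assoc, Matrix.nonsing_inv_mul _ hdR, Matrix.mul_one]
    rw [hTPRQ]
    exact eq_sub_of_add_eq e2
  have key2 : Q * R⁻¹ * Q = Q - T := by
    have e2 : Q * R⁻¹ * Q + Q * R⁻¹ * P = Q := by
      calc Q * R⁻¹ * Q + Q * R⁻¹ * P = Q * R⁻¹ * (Q + P) := (Matrix.mul_add _ _ _).symm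
        _ = Q := by
            rw [add_comm Q P, ← hRdef, Matrix.mul_assoc, Matrix.nonsing_inv_mul _ hdR,
              Matrix.mul_one]
    rw [hTQRP]
    exact eq_sub_of_add_eq e2
  -- scalar expansions
  rw [qf_sub_expand hPt, qf_sub_expand hQt, qf_sub_expand hTt, qf_sub_expand hRt]
  have hRm : R *ᵥ m = b := by
    rw [hmdef, Matrix.mulVec_mulVec, Matrix.mul_nonsing_inv _ hdR, Matrix.one_mulVec]
  have f1 : y ⬝ᵥ R *ᵥ y = y ⬝ᵥ P *ᵥ y + y ⬝ᵥ Q *ᵥ y := by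
    rw [hRdef, Matrix.add_mulVec, dotProduct_add]
  have f3 : y ⬝ᵥ R *ᵥ m = y ⬝ᵥ P *ᵥ μ1 + y ⬝ᵥ Q *ᵥ μ2 := by
    rw [hRm, hbdef, dotProduct_add]
  have f4 : m ⬝ᵥ R *ᵥ m = μ1 ⬝ᵥ (P * R⁻¹ * P) *ᵥ μ1 + 2 * (μ1 ⬝ᵥ (P * R⁻¹ * Q) *ᵥ μ2)
      + μ2 ⬝ᵥ (Q * R⁻¹ * Q) *ᵥ μ2 := by
    rw [hRm]
    have hmb : m ⬝ᵥ b = b ⬝ᵥ R⁻¹ *ᵥ b := by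
      rw [hmdef, dotProduct_comm]
    rw [hmb, hbdef]
    rw [add_dotProduct, Matrix.mulVec_add, dotProduct_add, dotProduct_add]
    have e11 : (P *ᵥ μ1) ⬝ᵥ R⁻¹ *ᵥ (P *ᵥ μ1) = μ1 ⬝ᵥ (P * R⁻¹ * P) *ᵥ μ1 := by
      rw [e_gen, hPt, Matrix.mulVec_mulVec, Matrix.mulVec_mulVec]
    have e12 : (P *ᵥ μ1) ⬝ᵥ R⁻¹ *ᵥ (Q *ᵥ μ2) = μ1 ⬝ᵥ (P * R⁻¹ * Q) *ᵥ μ2 := by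
      rw [e_gen, hPt, Matrix.mulVec_mulVec, Matrix.mulVec_mulVec]
    have e21 : (Q *ᵥ μ2) ⬝ᵥ R⁻¹ *ᵥ (P *ᵥ μ1) = μ1 ⬝ᵥ (P * R⁻¹ * Q) *ᵥ μ2 := by
      rw [e_gen, hQt, Matrix.mulVec_mulVec, Matrix.mulVec_mulVec,
        dot_mulVec_flip (Q * R⁻¹ * P) μ2 μ1, Matrix.transpose_mul, Matrix.transpose_mul,
        hPt, hQt, hRit, Matrix.mul_assoc]
    have e22 : (Q *ᵥ μ2) ⬝ᵥ R⁻¹ *ᵥ (Q *ᵥ μ2) = μ2 ⬝ᵥ (Q * R⁻¹ * Q) *ᵥ μ2 := by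
      rw [e_gen, hQt, Matrix.mulVec_mulVec, Matrix.mulVec_mulVec]
    rw [e11, e12, e21, e22]
    ring
  rw [f1, f3, f4, key1, key2, ← hTPRQ, Matrix.sub_mulVec, dotProduct_sub,
    Matrix.sub_mulVec, dotProduct_sub]
  ring

lemma posDef_add' {A B : Matrix (Fin N) (Fin N) ℝ} (hA : A.PosDef) (hB : B.PosDef) :
    (A + B).PosDef := by
  refine Matrix.PosDef.of_dotProduct_mulVec_pos (hA.1.add hB.1) fun x hx => ?_
  have := add_pos (hA.dotProduct_mulVec_pos hx) (hB.dotProduct_mulVec_pos hx)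
  simpa [Matrix.add_mulVec, dotProduct_add] using this

lemma det_conv {C1 C2 : Matrix (Fin N) (Fin N) ℝ} (h1 : C1.PosDef) (h2 : C2.PosDef) :
    (C1 + C2).det * ((C1⁻¹ + C2⁻¹)⁻¹).det = C1.det * C2.det := by
  have hR : (C1⁻¹ + C2⁻¹).PosDef := posDef_add' h1.inv h2.inv
  have hd1 : IsUnit C1.det := h1.det_pos.ne'.isUnit
  have hd2 : IsUnit C2.det := h2.det_pos.ne'.isUnit
  have hCRC : C1 * (C1⁻¹ + C2⁻¹) * C2 = C1 + C2 := by
    rw [Matrix.mul_add, Matrix.mul_nonsing_inv _ hd1, Matrix.add_mul, Matrix.one_mul,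
      Matrix.mul_assoc, Matrix.nonsing_inv_mul _ hd2, Matrix.mul_one, add_comm]
  have hdet : C1.det * (C1⁻¹ + C2⁻¹).det * C2.det = (C1 + C2).det := by
    rw [← hCRC, Matrix.det_mul, Matrix.det_mul]
  have hSdet : ((C1⁻¹ + C2⁻¹)⁻¹).det = ((C1⁻¹ + C2⁻¹).det)⁻¹ := by
    rw [Matrix.det_nonsing_inv, Ring.inverse_eq_inv']
  rw [hSdet, ← hdet]
  have : C1.det * (C1⁻¹ + C2⁻¹).det * C2.det * ((C1⁻¹ + C2⁻¹).det)⁻¹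
      = (C1.det * C2.det) * ((C1⁻¹ + C2⁻¹).det * ((C1⁻¹ + C2⁻¹).det)⁻¹) := by ring
  rw [this, mul_inv_cancel₀ hR.det_pos.ne', mul_one]

lemma gaussPdf_mul {μ1 μ2 : Fin N → ℝ} {C1 C2 : Matrix (Fin N) (Fin N) ℝ}
    (h1 : C1.PosDef) (h2 : C2.PosDef) :
    ∃ (S : Matrix (Fin N) (Fin N) ℝ) (m : Fin N → ℝ), S.PosDef ∧
      ∀ y, gaussPdf μ1 C1 y * gaussPdf μ2 C2 y
        = gaussPdf μ2 (C1 + C2) μ1 * gaussPdf m S y := by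
  have hR : (C1⁻¹ + C2⁻¹).PosDef := posDef_add' h1.inv h2.inv
  have h12 : (C1 + C2).PosDef := posDef_add' h1 h2
  refine ⟨(C1⁻¹ + C2⁻¹)⁻¹, (C1⁻¹ + C2⁻¹)⁻¹ *ᵥ (C1⁻¹ *ᵥ μ1 + C2⁻¹ *ᵥ μ2), hR.inv, fun y => ?_⟩
  have hSinv : ((C1⁻¹ + C2⁻¹)⁻¹)⁻¹ = C1⁻¹ + C2⁻¹ :=
    Matrix.nonsing_inv_nonsing_inv _ hR.det_pos.ne'.isUnit
  have hconst : (C1.det ^ (-(1:ℝ)/2)) * (C2.det ^ (-(1:ℝ)/2))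
      = ((C1 + C2).det ^ (-(1:ℝ)/2)) * (((C1⁻¹ + C2⁻¹)⁻¹).det ^ (-(1:ℝ)/2)) := by
    rw [← Real.mul_rpow h1.det_pos.le h2.det_pos.le,
      ← Real.mul_rpow h12.det_pos.le hR.inv.det_pos.le, det_conv h1 h2]
  have hquad := quad_split (μ1 := μ1) (μ2 := μ2) h1 h2 h12 hR y
  simp only [gaussPdf_eq, hSinv]
  rw [show ∀ a b c d e f : ℝ, (a * b * c) * (d * e * f) = ((a*d) * (b*e)) * (c*f) by intros; ring]
  rw [← Real.exp_add, show ∀ q1 q2 : ℝ, -(1/2)*q1 + -(1/2)*q2 = -(1/2)*(q1+q2) by intros; ring,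
    hquad, show ∀ q1 q2 : ℝ, -(1/2)*(q1+q2) = -(1/2)*q1 + -(1/2)*q2 by intros; ring,
    Real.exp_add]
  rw [hconst]
  ring

lemma gaussPdf_mul_integral {μ1 μ2 : Fin N → ℝ} {C1 C2 : Matrix (Fin N) (Fin N) ℝ}
    (h1 : C1.PosDef) (h2 : C2.PosDef) :
    Integrable (fun y => gaussPdf μ1 C1 y * gaussPdf μ2 C2 y) ∧
    ∫ y, gaussPdf μ1 C1 y * gaussPdf μ2 C2 y = gaussPdf μ2 (C1 + C2) μ1 := by
  obtain ⟨S, m, hS, heq⟩ := gaussPdf_mul h1 h2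
  have hfe : (fun y => gaussPdf μ1 C1 y * gaussPdf μ2 C2 y)
      = fun y => gaussPdf μ2 (C1 + C2) μ1 * gaussPdf m S y := funext heq
  constructor
  · rw [hfe]
    exact (gaussPdf_integrable (μ0 := m) hS).const_mul (gaussPdf μ2 (C1 + C2) μ1)
  · rw [hfe, MeasureTheory.integral_const_mul, integral_gaussPdf hS, mul_one]

lemma gaussPdf_continuous (μ0 : Fin N → ℝ) (C : Matrix (Fin N) (Fin N) ℝ) :
    Continuous (gaussPdf μ0 C) := by
  apply Continuous.mul continuous_const
  apply Real.continuous_exp.comp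
  apply Continuous.mul continuous_const
  have hsub : Continuous (fun y : Fin N → ℝ => y - μ0) := continuous_id.sub continuous_const
  have hdot : Continuous (fun x : Fin N → ℝ => x ⬝ᵥ C⁻¹ *ᵥ x) := by
    unfold dotProduct Matrix.mulVec
    exact continuous_finset_sum _ fun i _ => (continuous_apply i).mul
      (continuous_finset_sum _ fun j _ => (continuous_const.mul (continuous_apply j)))
  exact hdot.comp hsub

lemma integrable_gaussPdf_sq {μ0 : Fin N → ℝ} {C : Matrix (Fin N) (Fin N) ℝ} (hC : C.PosDef) :
    Integrable (fun y => (gaussPdf μ0 C y) ^ 2) := by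
  have hA : ((2:ℝ) • C⁻¹).PosDef := posDef_smul hC.inv two_pos
  have heq : ∀ y, (gaussPdf μ0 C y) ^ 2
      = ((2 * π) ^ (-(N:ℝ)/2) * C.det ^ (-(1:ℝ)/2)) ^ 2
        * Real.exp (-(1/2) * (y - μ0) ⬝ᵥ ((2:ℝ) • C⁻¹) *ᵥ (y - μ0)) := by
    intro y
    rw [gaussPdf_eq, mul_pow]
    congr 1
    rw [sq, ← Real.exp_add, Matrix.smul_mulVec, dotProduct_smul, smul_eq_mul]
    congr 1
    ring
  simp only [heq]
  exact (exp_qf_shift hA μ0).1.const_mul _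

lemma integrable_gaussPdf_sqrt {μ0 : Fin N → ℝ} {C : Matrix (Fin N) (Fin N) ℝ} (hC : C.PosDef) :
    Integrable (fun y => Real.sqrt (gaussPdf μ0 C y)) := by
  have hA : (((1:ℝ)/2) • C⁻¹).PosDef := posDef_smul hC.inv (by norm_num)
  have hcpos : (0:ℝ) < (2 * π) ^ (-(N:ℝ)/2) * C.det ^ (-(1:ℝ)/2) := by
    have := hC.det_pos
    positivity
  have heq : ∀ y, Real.sqrt (gaussPdf μ0 C y)
      = Real.sqrt ((2 * π) ^ (-(N:ℝ)/2) * C.det ^ (-(1:ℝ)/2))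
        * Real.exp (-(1/2) * (y - μ0) ⬝ᵥ (((1:ℝ)/2) • C⁻¹) *ᵥ (y - μ0)) := by
    intro y
    rw [gaussPdf_eq, Real.sqrt_mul hcpos.le]
    congr 1
    rw [Matrix.smul_mulVec, dotProduct_smul, smul_eq_mul]
    rw [show Real.exp (-(1/2) * (1/2 * ((y - μ0) ⬝ᵥ C⁻¹ *ᵥ (y - μ0))))
        = Real.exp ((-(1/2) * ((y - μ0) ⬝ᵥ C⁻¹ *ᵥ (y - μ0))) / 2) by congr 1; ring]
    rw [show Real.exp ((-(1/2) * ((y - μ0) ⬝ᵥ C⁻¹ *ᵥ (y - μ0))) / 2)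
        = Real.sqrt (Real.exp (-(1/2) * ((y - μ0) ⬝ᵥ C⁻¹ *ᵥ (y - μ0)))) from ?_]
    · rw [show Real.exp (-(1/2) * ((y - μ0) ⬝ᵥ C⁻¹ *ᵥ (y - μ0)))
          = (Real.exp ((-(1/2) * ((y - μ0) ⬝ᵥ C⁻¹ *ᵥ (y - μ0))) / 2)) ^ 2 by
            rw [← Real.exp_nat_mul]; congr 1; ring]
      rw [Real.sqrt_sq (Real.exp_nonneg _)]
  simp only [heq]
  exact (exp_qf_shift hA μ0).1.const_mul _

lemma abs_log_le {t : ℝ} (ht : 0 < t) : |Real.log t| ≤ t + 2 / Real.sqrt t := by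
  have hst : 0 < Real.sqrt t := Real.sqrt_pos.mpr ht
  rcases le_or_gt 1 t with h | h
  · rw [abs_of_nonneg (Real.log_nonneg h)]
    have h1 : Real.log t ≤ t - 1 := Real.log_le_sub_one_of_pos ht
    have h2 : 0 ≤ 2 / Real.sqrt t := by positivity
    linarith
  · rw [abs_of_nonpos (Real.log_nonpos ht.le h.le)]
    have h1 : Real.log ((Real.sqrt t)⁻¹) ≤ (Real.sqrt t)⁻¹ - 1 :=
      Real.log_le_sub_one_of_pos (by positivity)
    rw [Real.log_inv, Real.log_sqrt ht.le] at h1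
    have h2 : -Real.log t ≤ 2 * (Real.sqrt t)⁻¹ - 2 := by linarith
    have h3 : 2 * (Real.sqrt t)⁻¹ = 2 / Real.sqrt t := by ring
    linarith


/-- Gaussian-mixture entropy lower bound, Huber et al.:
for a Gaussian mixture `p(y) = Σ_i w_i N(y; μ_i, C_i)` with positive weights summing
to 1 and symmetric positive definite covariances,
`H(p) ≥ -Σ_i w_i log(Σ_j w_j N(μ_i; μ_j, C_i + C_j))`. -/
theorem stmt14 (N K : ℕ) (w : Fin K → ℝ) (hw : ∀ i, 0 < w i) (hws : ∑ i, w i = 1)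
    (μ : Fin K → Fin N → ℝ) (C : Fin K → Matrix (Fin N) (Fin N) ℝ)
    (hC : ∀ i, (C i).PosDef) :
    Hd (fun y => ∑ i, w i * gaussPdf (μ i) (C i) y) ≥
      -∑ i, w i * Real.log (∑ j, w j * gaussPdf (μ j) (C i + C j) (μ i)) := by
  classical
  rcases Nat.eq_zero_or_pos K with hK0 | hKpos
  · subst hK0
    simp at hws
  haveI : Nonempty (Fin K) := Fin.pos_iff_nonempty.mp hKpos
  set g : Fin K → (Fin N → ℝ) → ℝ := fun i y => gaussPdf (μ i) (C i) y with hgdef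
  set p : (Fin N → ℝ) → ℝ := fun y => ∑ i, w i * g i y with hpdef
  set a : Fin K → ℝ := fun i => ∑ j, w j * gaussPdf (μ j) (C i + C j) (μ i) with hadef
  have hgpos : ∀ i y, 0 < g i y := fun i y => gaussPdf_pos (hC i) y
  have hppos : ∀ y, 0 < p y := fun y =>
    Finset.sum_pos (fun i _ => mul_pos (hw i) (hgpos i y)) Finset.univ_nonempty
  have hplow : ∀ i y, w i * g i y ≤ p y := fun i y =>
    Finset.single_le_sum (fun j _ => (mul_pos (hw j) (hgpos j y)).le) (Finset.mem_univ i)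
  set M : ℝ := ∑ i, w i * ((2*π)^(-(N:ℝ)/2) * (C i).det ^ (-(1:ℝ)/2)) with hMdef
  have hpleM : ∀ y, p y ≤ M := by
    intro y
    apply Finset.sum_le_sum
    intro i _
    exact mul_le_mul_of_nonneg_left (gaussPdf_le (hC i) y) (hw i).le
  have hapos : ∀ i, 0 < a i := fun i =>
    Finset.sum_pos (fun j _ => mul_pos (hw j) (gaussPdf_pos (posDef_add' (hC i) (hC j)) _))
      Finset.univ_nonempty
  have hint_g : ∀ i, Integrable (g i) := fun i => gaussPdf_integrable (hC i)
  have hint_p : Integrable p := integrable_finset_sum _ (fun i _ => (hint_g i).const_mul _)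
  have hgp_eq : ∀ i, (fun y => g i y * p y) = fun y => ∑ j, w j * (g i y * g j y) := by
    intro i
    funext y
    rw [hpdef, Finset.mul_sum]
    congr 1
    funext j
    ring
  have hint_gp : ∀ i, Integrable (fun y => g i y * p y) := by
    intro i
    rw [hgp_eq i]
    exact integrable_finset_sum _ fun j _ =>
      ((gaussPdf_mul_integral (hC i) (hC j)).1.const_mul _)
  have hint_int_gp : ∀ i, ∫ y, g i y * p y = a i := by
    intro i
    rw [hgp_eq i, integral_finset_sum _ (fun j _ =>
      ((gaussPdf_mul_integral (hC i) (hC j)).1.const_mul _))]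
    rw [hadef]
    congr 1
    funext j
    rw [MeasureTheory.integral_const_mul, (gaussPdf_mul_integral (hC i) (hC j)).2]
  have hcont_p : Continuous p :=
    continuous_finset_sum _ fun i _ => (continuous_const.mul (gaussPdf_continuous _ _))
  have hcont_logp : Continuous fun y => Real.log (p y) :=
    Continuous.log hcont_p (fun y => (hppos y).ne')
  -- integrability of g i * log p
  have hint_glogp : ∀ i, Integrable (fun y => g i y * Real.log (p y)) := by
    intro i
    set G : (Fin N → ℝ) → ℝ := fun y =>
      |Real.log M| * g i y + w i * (g i y)^2 + (2 / Real.sqrt (w i)) * Real.sqrt (g i y)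
      with hGdef
    have hGint : Integrable G := by
      exact (((hint_g i).const_mul _).add ((integrable_gaussPdf_sq (hC i)).const_mul _)).add
        ((integrable_gaussPdf_sqrt (hC i)).const_mul _)
    apply hGint.mono
    · exact ((gaussPdf_continuous (μ i) (C i)).mul hcont_logp).aestronglyMeasurable
    · apply Filter.Eventually.of_forall
      intro y
      have hpos := hgpos i y
      have hwgi : 0 < w i * g i y := mul_pos (hw i) hpos
      have hlogup : Real.log (p y) ≤ Real.log M :=
        Real.log_le_log (hppos y) (hpleM y)
      have hlogdown : Real.log (w i * g i y) ≤ Real.log (p y) :=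
        Real.log_le_log hwgi (hplow i y)
      have habs : |Real.log (p y)| ≤ |Real.log M| + |Real.log (w i * g i y)| := by
        rw [abs_le]
        constructor
        · have := neg_abs_le (Real.log (w i * g i y))
          have := abs_nonneg (Real.log M)
          linarith
        · have := le_abs_self (Real.log M)
          have := abs_nonneg (Real.log (w i * g i y))
          linarith
      have hlogwg : |Real.log (w i * g i y)| ≤ w i * g i y + 2 / Real.sqrt (w i * g i y) :=
        abs_log_le hwgi
      have hgdivsqrt : g i y * (2 / Real.sqrt (w i * g i y))
          = (2 / Real.sqrt (w i)) * Real.sqrt (g i y) := by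
        rw [Real.sqrt_mul (hw i).le]
        have h1 : Real.sqrt (g i y) ≠ 0 := (Real.sqrt_pos.mpr hpos).ne'
        have h2 : Real.sqrt (w i) ≠ 0 := (Real.sqrt_pos.mpr (hw i)).ne'
        have hms : Real.sqrt (g i y) * Real.sqrt (g i y) = g i y :=
          Real.mul_self_sqrt hpos.le
        field_simp
        linear_combination (-1 : ℝ) * hms
      have hGnn : 0 ≤ G y := by
        rw [hGdef]
        have h0 := abs_nonneg (Real.log M)
        have h1 := hpos.le
        have h2 : (0:ℝ) ≤ Real.sqrt (g i y) := Real.sqrt_nonneg _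
        have h3 : (0:ℝ) ≤ 2 / Real.sqrt (w i) :=
          div_nonneg (by norm_num) (Real.sqrt_nonneg _)
        have h4 : (0:ℝ) ≤ w i * (g i y)^2 := (mul_pos (hw i) (pow_pos hpos 2)).le
        exact add_nonneg (add_nonneg (mul_nonneg h0 h1) h4) (mul_nonneg h3 h2)
      rw [Real.norm_eq_abs, Real.norm_eq_abs, abs_of_nonneg hGnn, abs_mul,
        abs_of_nonneg hpos.le]
      calc g i y * |Real.log (p y)|
          ≤ g i y * (|Real.log M| + (w i * g i y + 2 / Real.sqrt (w i * g i y))) := by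
            apply mul_le_mul_of_nonneg_left _ hpos.le
            calc |Real.log (p y)| ≤ |Real.log M| + |Real.log (w i * g i y)| := habs
              _ ≤ _ := by linarith
        _ = |Real.log M| * g i y + w i * (g i y)^2
              + g i y * (2 / Real.sqrt (w i * g i y)) := by ring
        _ = G y := by rw [hgdivsqrt, hGdef]
  -- Jensen-type bound
  have hbound : ∀ i, ∫ y, g i y * Real.log (p y) ≤ Real.log (a i) := by
    intro i
    have hrw : (fun y => g i y * (p y / a i - 1 + Real.log (a i)))
        = fun y => (1 / a i) * (g i y * p y) + (Real.log (a i) - 1) * g i y := by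
      funext y
      field_simp
      ring
    have hint_rhs : Integrable (fun y => g i y * (p y / a i - 1 + Real.log (a i))) := by
      rw [hrw]
      exact ((hint_gp i).const_mul _).add ((hint_g i).const_mul _)
    have hdom : ∀ y, g i y * Real.log (p y) ≤ g i y * (p y / a i - 1 + Real.log (a i)) := by
      intro y
      apply mul_le_mul_of_nonneg_left _ (hgpos i y).le
      have hlog : Real.log (p y / a i) ≤ p y / a i - 1 :=
        Real.log_le_sub_one_of_pos (div_pos (hppos y) (hapos i))
      rw [Real.log_div (hppos y).ne' (hapos i).ne'] at hlog
      linarith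
    calc ∫ y, g i y * Real.log (p y)
        ≤ ∫ y, g i y * (p y / a i - 1 + Real.log (a i)) :=
          integral_mono (hint_glogp i) hint_rhs hdom
      _ = (1 / a i) * (∫ y, g i y * p y) + (Real.log (a i) - 1) * ∫ y, g i y := by
          rw [hrw, integral_add ((hint_gp i).const_mul _) ((hint_g i).const_mul _),
            MeasureTheory.integral_const_mul, MeasureTheory.integral_const_mul]
      _ = Real.log (a i) := by
          rw [hint_int_gp i, integral_gaussPdf (hC i)]
          rw [one_div, inv_mul_cancel₀ (hapos i).ne']
          ring
  -- split the entropy integral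
  have hsplit : ∫ y, p y * Real.log (p y) = ∑ i, w i * ∫ y, g i y * Real.log (p y) := by
    have hrw : (fun y => p y * Real.log (p y))
        = fun y => ∑ i, w i * (g i y * Real.log (p y)) := by
      funext y
      rw [hpdef, Finset.sum_mul]
      congr 1
      funext i
      ring
    rw [hrw, integral_finset_sum _ (fun i _ => (hint_glogp i).const_mul _)]
    congr 1
    funext i
    rw [MeasureTheory.integral_const_mul]
  rw [ge_iff_le, Hd, neg_le_neg_iff]
  show ∫ y, p y * Real.log (p y) ≤ ∑ i, w i * Real.log (a i)
  calc ∫ y, p y * Real.log (p y)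
      = ∑ i, w i * ∫ y, g i y * Real.log (p y) := hsplit
    _ ≤ ∑ i, w i * Real.log (a i) :=
        Finset.sum_le_sum fun i _ => mul_le_mul_of_nonneg_left (hbound i) (hw i).le
end
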